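/- arXiv:1907.02120 — 4 statements merged into one kernel-verified Lean document; each statement's English description precedes it below -/
import Mathlib

section
/- Let G = (V, E) be a graph and U ⊂ V nonempty with |δ(U)| = 3. Let F_U be a tour of G^U (the graph obtained by contracting V∖U to a pseudovertex) and F_{V∖U} a tour of G^{V∖U} such that χ^{F_U}_e = χ^{F_{V∖U}}_e for every e ∈ δ(U), and assume that F_U minus the edges incident on the pseudovertex induces a connected multigraph on U. Then the multiset F defined by χ^F_e = χ^{F_U}_e for e ∈ E(G^U) and χ^F_e = χ^{F_{V∖U}}_e for e ∈ E(G^{V∖U}) is a tour of G. -/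
open scoped Classical

noncomputable section

namespace TSPPaper

variable {V : Type*} [Fintype V] [DecidableEq V]

/-- The sum of `x` over the edges crossing the cut `U` (each crossing edge counted once). -/
def cutSum (x : Sym2 V → ℝ) (U : Finset V) : ℝ :=
  ∑ u ∈ U, ∑ v ∈ Uᶜ, x s(u, v)

/-- Membership in the subtour elimination polytope `SUBT(K_n)`. -/
def inSUBT (x : Sym2 V → ℝ) : Prop :=
  (∀ e : Sym2 V, e.IsDiag → x e = 0) ∧
  (∀ e : Sym2 V, 0 ≤ x e) ∧ (∀ e : Sym2 V, x e ≤ 1) ∧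
  (∀ v : V, cutSum x {v} = 2) ∧
  (∀ U : Finset V, U.Nonempty → U ≠ Finset.univ → 2 ≤ cutSum x U)

/-- The simple graph underlying the support of a multigraph given by edge multiplicities. -/
def supportGraph (F : Sym2 V → ℕ) : SimpleGraph V where
  Adj u v := u ≠ v ∧ 0 < F s(u, v)
  symm := ⟨fun u v h => ⟨h.1.symm, by rw [Sym2.eq_swap]; exact h.2⟩⟩
  loopless := ⟨fun u h => h.1 rfl⟩

/-- The support graph of a real edge vector. -/
def suppGraph (x : Sym2 V → ℝ) : SimpleGraph V where
  Adj u v := u ≠ v ∧ 0 < x s(u, v)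
  symm := ⟨fun u v h => ⟨h.1.symm, by rw [Sym2.eq_swap]; exact h.2⟩⟩
  loopless := ⟨fun u h => h.1 rfl⟩

/-- Degree of a vertex in a multigraph given by edge multiplicities. -/
def multiDeg (F : Sym2 V → ℕ) (v : V) : ℕ := ∑ u : V, F s(v, u)

/-- A tour: a spanning connected Eulerian multigraph (with no loops). -/
def IsTour (F : Sym2 V → ℕ) : Prop :=
  (∀ e : Sym2 V, e.IsDiag → F e = 0) ∧
  (∀ v : V, Even (multiDeg F v)) ∧
  (supportGraph F).Connected

/-- A tour using only edges in the support of `x`. -/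
def IsTourSupp (x : Sym2 V → ℝ) (F : Sym2 V → ℕ) : Prop :=
  IsTour F ∧ ∀ e : Sym2 V, F e ≠ 0 → 0 < x e

/-- A tour of a (simple) graph `G`. -/
def IsTourOfGraph (G : SimpleGraph V) (F : Sym2 V → ℕ) : Prop :=
  IsTour F ∧ ∀ e : Sym2 V, F e ≠ 0 → e ∈ G.edgeSet

/-- Membership in `TSP(K_n)`: the convex hull of incidence vectors of tours. -/
def inTSP (y : Sym2 V → ℝ) : Prop :=
  ∃ (k : ℕ) (F : Fin k → Sym2 V → ℕ) (lam : Fin k → ℝ),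
    (∀ i, IsTour (F i)) ∧ (∀ i, 0 ≤ lam i) ∧ (∑ i, lam i = 1) ∧
    (∀ e : Sym2 V, y e = ∑ i, lam i * (F i e : ℝ))

/-- number of support edges incident on a vertex -/
def suppDeg (x : Sym2 V → ℝ) (v : V) : ℕ :=
  (Finset.univ.filter fun e : Sym2 V => 0 < x e ∧ v ∈ e).card

/-- A θ-cyclic point. -/
def IsCyclic (θ : ℝ) (x : Sym2 V → ℝ) : Prop :=
  0 < θ ∧ θ ≤ 1 / 2 ∧ inSUBT x ∧
  (∀ e : Sym2 V, x e = 0 ∨ x e = θ ∨ x e = 1 - θ ∨ x e = 1) ∧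
  (∀ v : V, suppDeg x v ≤ 3) ∧
  (∀ v : V, ∃ e : Sym2 V, v ∈ e ∧ x e = 1)

/-- The edges of the complete graph crossing the cut `U`. -/
def crossEdges (U : Finset V) : Finset (Sym2 V) :=
  Finset.univ.filter fun e : Sym2 V => ∃ u v : V, e = s(u, v) ∧ u ∈ U ∧ v ∉ U

/-- The support edges of `x` crossing the cut `U`. -/
def cutEdges (x : Sym2 V → ℝ) (U : Finset V) : Finset (Sym2 V) :=
  (crossEdges U).filter fun e => 0 < x e

/-- The edges of the graph `G` crossing the cut `U`. -/
def cutEdgesG (G : SimpleGraph V) (U : Finset V) : Finset (Sym2 V) :=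
  (crossEdges U).filter fun e => e ∈ G.edgeSet

/-- A critical cut of the support graph of `x`. -/
def IsCriticalCut (x : Sym2 V → ℝ) (U : Finset V) : Prop :=
  2 ≤ U.card ∧ 2 ≤ Uᶜ.card ∧
  (cutEdges x U).card = 3 ∧
  ((cutEdges x U).filter fun e => x e = 1).card = 1 ∧
  ∀ e ∈ cutEdges x U, ∀ f ∈ cutEdges x U, e ≠ f → ∀ w : V, w ∈ e → w ∈ f → False

/-- Vertex set after contracting the complement of `U` to a single pseudovertex `none`. -/
abbrev Contracted (U : Finset V) := Option {u : V // u ∈ U}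

/-- The contraction map sending every vertex outside of `U` to the pseudovertex. -/
def contractMap (U : Finset V) (w : V) : Contracted U :=
  if h : w ∈ U then some ⟨w, h⟩ else none

/-- The point induced on the contracted vertex set (loops are removed). -/
def contractPoint (x : Sym2 V → ℝ) (U : Finset V) : Sym2 (Contracted U) → ℝ :=
  fun d => if d.IsDiag then 0
    else ∑ e ∈ Finset.univ.filter (fun e : Sym2 V => Sym2.map (contractMap U) e = d), x e

/-- The eight allowed patterns, as multiplicity triples on `(e_u, f_u, g_u)`. -/
def patternOK (a b c : ℕ) : Prop :=
  (a, b, c) = (2, 0, 0) ∨ (a, b, c) = (1, 1, 0) ∨ (a, b, c) = (1, 0, 1) ∨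
  (a, b, c) = (2, 2, 0) ∨ (a, b, c) = (2, 0, 2) ∨ (a, b, c) = (2, 1, 1) ∨
  (a, b, c) = (1, 2, 1) ∨ (a, b, c) = (1, 1, 2)

/-- A handpicked tour (of the support of a cyclic point `x`): around every vertex `u` the
multiset of edges of the tour incident on `u` is one of the allowed patterns on the
1-edge and the two fractional edges at `u`. -/
def Handpicked (x : Sym2 V → ℝ) (F : Sym2 V → ℕ) : Prop :=
  ∀ u : V, ∃ e f g : Sym2 V,
    u ∈ e ∧ u ∈ f ∧ u ∈ g ∧ e ≠ f ∧ e ≠ g ∧ f ≠ g ∧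
    x e = 1 ∧ 0 < x f ∧ x f < 1 ∧ 0 < x g ∧ x g < 1 ∧
    (∀ e' : Sym2 V, 0 < x e' → u ∈ e' → e' = e ∨ e' = f ∨ e' = g) ∧
    patternOK (F e) (F f) (F g)

/-- `φ₂(e)`: total weight of the members of the combination in which `e` is doubled. -/
def phi2 {k : ℕ} (lam : Fin k → ℝ) (F : Fin k → Sym2 V → ℕ) (e : Sym2 V) : ℝ :=
  ∑ i ∈ Finset.univ.filter (fun i : Fin k => F i e = 2), lam i

/-- Frequency of the pattern whose multiplicities on the edges `(e, f, g)` are given by `p`. -/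
def patFreq {k : ℕ} (lam : Fin k → ℝ) (F : Fin k → Sym2 V → ℕ)
    (e f g : Sym2 V) (p : ℕ × ℕ × ℕ) : ℝ :=
  ∑ i ∈ Finset.univ.filter (fun i : Fin k => (F i e, F i f, F i g) = p), lam i

/-- The simple graph given by a finite set of edges. -/
def graphOfEdges (T : Finset (Sym2 V)) : SimpleGraph V where
  Adj u v := u ≠ v ∧ s(u, v) ∈ T
  symm := ⟨fun u v h => ⟨h.1.symm, by rw [Sym2.eq_swap]; exact h.2⟩⟩
  loopless := ⟨fun u h => h.1 rfl⟩

/-- Degree of a vertex in an edge set. -/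
def edgeDeg (T : Finset (Sym2 V)) (v : V) : ℕ := (T.filter fun e => v ∈ e).card

/-- A connector of the support graph of `x`: a connected spanning subgraph, no doubled edges. -/
def IsConnector (x : Sym2 V → ℝ) (T : Finset (Sym2 V)) : Prop :=
  (∀ e ∈ T, 0 < x e) ∧ (graphOfEdges T).Connected

/-- `M` is an induced matching of the support graph of `x` consisting of 1-edges. -/
def IsInducedMatching (x : Sym2 V → ℝ) (M : Finset (Sym2 V)) : Prop :=
  (∀ e ∈ M, x e = 1) ∧
  (∀ e ∈ M, ∀ f ∈ M, e ≠ f → ∀ w : V, w ∈ e → w ∈ f → False) ∧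
  (∀ e : Sym2 V, 0 < x e → (∀ w : V, w ∈ e → ∃ f ∈ M, w ∈ f) → e ∈ M)

/-- Property `P(v, M, Λ)` for a convex combination `{lam, T}` of connectors. -/
def PropertyP (x : Sym2 V → ℝ) (v : V) (M : Finset (Sym2 V)) (L : ℝ)
    {k : ℕ} (lam : Fin k → ℝ) (T : Fin k → Finset (Sym2 V)) : Prop :=
  (∑ i ∈ Finset.univ.filter (fun i : Fin k => edgeDeg (T i) v = 1), lam i) = L ∧
  (∑ i ∈ Finset.univ.filter (fun i : Fin k => edgeDeg (T i) v = 3), lam i) = L ∧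
  (∑ i ∈ Finset.univ.filter (fun i : Fin k => edgeDeg (T i) v = 2), lam i) = 1 - 2 * L ∧
  (∀ e ∈ M, ∀ w : V, w ∈ e → ∀ i, edgeDeg (T i) w = 2) ∧
  (∀ i, ((graphOfEdges (T i)).induce {u : V | u ≠ v}).Connected)

/-- An `O`-join of the support graph of `x`. -/
def IsOJoin (x : Sym2 V → ℝ) (O : Finset V) (J : Finset (Sym2 V)) : Prop :=
  (∀ e ∈ J, 0 < x e) ∧ ∀ v : V, (Odd (edgeDeg J v) ↔ v ∈ O)

/-- An `O`-join of the graph `G`. -/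
def IsOJoinOfGraph (G : SimpleGraph V) (O : Finset V) (J : Finset (Sym2 V)) : Prop :=
  (∀ e ∈ J, e ∈ G.edgeSet) ∧ ∀ v : V, (Odd (edgeDeg J v) ↔ v ∈ O)

/-- The support graph, after contracting the complement of `U`, of a multigraph on `V`
whose edges all have an endpoint in `U`. -/
def quotGraph (U : Finset V) (F : Sym2 V → ℕ) : SimpleGraph (Contracted U) where
  Adj a b := a ≠ b ∧ ∃ u v : V, 0 < F s(u, v) ∧ contractMap U u = a ∧ contractMap U v = b
  symm := ⟨fun a b h => ⟨h.1.symm, by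
    obtain ⟨u, v, h1, h2, h3⟩ := h.2
    exact ⟨v, u, by rw [Sym2.eq_swap]; exact h1, h3, h2⟩⟩⟩
  loopless := ⟨fun a h => h.1 rfl⟩

/-- A tour of the graph `G^U` obtained from `G` by contracting the complement of `U`,
encoded by the multiplicities of the surviving edges of `G` (those with an endpoint in `U`). -/
def IsTourOfContraction (G : SimpleGraph V) (U : Finset V) (F : Sym2 V → ℕ) : Prop :=
  (∀ e : Sym2 V, F e ≠ 0 → e ∈ G.edgeSet ∧ ∃ w, w ∈ e ∧ w ∈ U) ∧
  (∀ u ∈ U, Even (multiDeg F u)) ∧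
  Even (∑ u ∈ U, ∑ w ∈ Uᶜ, F s(u, w)) ∧
  (quotGraph U F).Connected

/-- The number of critical cuts of the support graph of `x`. -/
def criticalCutCount (x : Sym2 V → ℝ) : ℕ :=
  Set.ncard {U : Finset V | IsCriticalCut x U}

/-- Transfer reachability along a vertex map that sends adjacent vertices to
reachable vertices. -/
lemma reachable_map_aux {α β : Type*} {G : SimpleGraph α} {H : SimpleGraph β} (f : α → β)
    (h : ∀ a b, G.Adj a b → H.Reachable (f a) (f b)) {a b : α} (r : G.Reachable a b) :
    H.Reachable (f a) (f b) := by
  obtain ⟨w⟩ := r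
  induction w with
  | nil => exact SimpleGraph.Reachable.refl _
  | cons hadj _ ih => exact (h _ _ hadj).trans ih

lemma contractMap_eq_some {U : Finset V} {u : V} {w : {x : V // x ∈ U}}
    (h : contractMap U u = some w) : u = (w : V) := by
  unfold contractMap at h
  split at h
  · simpa using congrArg (Option.map Subtype.val) h
  · simp at h

lemma contractMap_eq_none {U : Finset V} {u : V}
    (h : contractMap U u = none) : u ∉ U := by
  unfold contractMap at h
  split at h
  · simp at h
  · assumption

/-- Claim `gluenow2`. Gluing a tour of `G^U` with a tour of `G^{V∖U}` that agree
on the three cut edges, provided the first one stays connected on `U` after deleting the edges at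
the pseudovertex, yields a tour of `G`. -/
theorem statement8 {V : Type*} [Fintype V] [DecidableEq V]
    (G : SimpleGraph V) (U : Finset V) (hU : U.Nonempty) (hU' : U ≠ Finset.univ)
    (h3 : (cutEdgesG G U).card = 3)
    (FU FW : Sym2 V → ℕ)
    (hFU : IsTourOfContraction G U FU)
    (hFW : IsTourOfContraction G Uᶜ FW)
    (hagree : ∀ e ∈ cutEdgesG G U, FU e = FW e)
    (hconn : ((supportGraph FU).induce {u : V | u ∈ U}).Connected)
    (F : Sym2 V → ℕ)
    (hF1 : ∀ e : Sym2 V, (∃ w, w ∈ e ∧ w ∈ U) → F e = FU e)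
    (hF2 : ∀ e : Sym2 V, (∃ w, w ∈ e ∧ w ∉ U) → F e = FW e) :
    IsTourOfGraph G F := by
  obtain ⟨u0, hu0⟩ := hU
  -- every nonzero edge of F is an edge of G
  have hedge : ∀ e : Sym2 V, F e ≠ 0 → e ∈ G.edgeSet := by
    intro e he
    induction e using Sym2.ind with
    | _ u v =>
      by_cases hu : u ∈ U
      · have hFe : F s(u, v) = FU s(u, v) := hF1 _ ⟨u, Sym2.mem_mk_left u v, hu⟩
        exact (hFU.1 _ (by rw [← hFe]; exact he)).1
      · have hFe : F s(u, v) = FW s(u, v) := hF2 _ ⟨u, Sym2.mem_mk_left u v, hu⟩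
        exact (hFW.1 _ (by rw [← hFe]; exact he)).1
  -- no loops
  have hloop : ∀ e : Sym2 V, e.IsDiag → F e = 0 := by
    intro e he
    by_contra h
    exact G.not_isDiag_of_mem_edgeSet (hedge e h) he
  -- even degrees
  have hdeg : ∀ v : V, Even (multiDeg F v) := by
    intro v
    by_cases hv : v ∈ U
    · have : multiDeg F v = multiDeg FU v := by
        unfold multiDeg
        refine Finset.sum_congr rfl fun u _ => ?_
        exact hF1 _ ⟨v, Sym2.mem_mk_left v u, hv⟩
      rw [this]; exact hFU.2.1 v hv
    · have : multiDeg F v = multiDeg FW v := by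
        unfold multiDeg
        refine Finset.sum_congr rfl fun u _ => ?_
        exact hF2 _ ⟨v, Sym2.mem_mk_left v u, hv⟩
      rw [this]; exact hFW.2.1 v (Finset.mem_compl.2 hv)
  -- reachability inside U
  have hreachU : ∀ u : V, u ∈ U → (supportGraph F).Reachable u u0 := by
    intro u hu
    have hr := hconn.preconnected ⟨u, hu⟩ ⟨u0, hu0⟩
    exact reachable_map_aux (fun a : {x : V // x ∈ U} => (a : V))
      (by
        intro a b hab
        refine SimpleGraph.Adj.reachable ?_
        obtain ⟨hne, hpos⟩ : (a : V) ≠ (b : V) ∧ 0 < FU s((a : V), (b : V)) := hab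
        refine ⟨hne, ?_⟩
        rw [hF1 s((a : V), (b : V)) ⟨a, Sym2.mem_mk_left _ _, a.2⟩]
        exact hpos) hr
  -- reachability from everywhere
  have hreach : ∀ v : V, (supportGraph F).Reachable v u0 := by
    intro v
    by_cases hv : v ∈ U
    · exact hreachU v hv
    · have hr := hFW.2.2.2.preconnected (some ⟨v, Finset.mem_compl.2 hv⟩) none
      have key := reachable_map_aux
        (fun a : Contracted Uᶜ => Option.elim a u0 (fun w => (w : V)))
        (G := quotGraph Uᶜ FW) (H := supportGraph F)
        (by
          intro a b hab
          obtain ⟨hne, u1, u2, hpos, h1, h2⟩ := hab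
          have step : ∀ (w : {x : V // x ∈ Uᶜ}) (u1 u2 : V), 0 < FW s(u1, u2) →
              contractMap Uᶜ u1 = some w → contractMap Uᶜ u2 = none →
              (supportGraph F).Reachable (w : V) u0 := by
            intro w u1 u2 hpos h1 h2
            have e1 : u1 = (w : V) := contractMap_eq_some h1
            have e2 : u2 ∈ U := by
              have := contractMap_eq_none h2
              simpa using this
            have hw : (w : V) ∉ U := Finset.mem_compl.1 w.2
            have hne12 : u1 ≠ u2 := by
              rw [e1]; intro h; rw [h] at hw; exact hw e2
            have hadj : (supportGraph F).Adj u1 u2 := by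
              refine ⟨hne12, ?_⟩
              rw [hF2 s(u1, u2) ⟨u1, Sym2.mem_mk_left _ _, by rw [e1]; exact hw⟩]
              exact hpos
            rw [e1] at hadj
            exact hadj.reachable.trans (hreachU u2 e2)
          match a, b with
          | none, none => exact absurd rfl hne
          | some w, none => exact step w u1 u2 hpos h1 h2
          | none, some w =>
            exact (step w u2 u1 (by rwa [Sym2.eq_swap]) h2 h1).symm
          | some w1, some w2 =>
            have e1 : u1 = (w1 : V) := contractMap_eq_some h1
            have e2 : u2 = (w2 : V) := contractMap_eq_some h2
            have hw : (w1 : V) ∉ U := Finset.mem_compl.1 w1.2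
            have hnev : (w1 : V) ≠ (w2 : V) := fun h => hne (by simp [Subtype.ext h])
            have hposF : 0 < F s((w1 : V), (w2 : V)) := by
              rw [hF2 s((w1 : V), (w2 : V)) ⟨(w1 : V), Sym2.mem_mk_left _ _, hw⟩,
                ← e1, ← e2]
              exact hpos
            exact SimpleGraph.Adj.reachable ⟨hnev, hposF⟩) hr
      simpa using key
  haveI : Nonempty V := ⟨u0⟩
  refine ⟨⟨hloop, hdeg, ?_⟩, hedge⟩
  exact ⟨fun a b => (hreach a).trans (hreach b).symm⟩

end TSPPaper
end
end

section
/- Let x be a θ-cyclic point with cubic support graph G_x and let U ⊂ V_n be a critical cut of G_x. Suppose x^U can be written as a convex combination {φ^U, 𝓕^U} of handpicked tours of G_x^U, and x^{Ū} as a convex combination {φ^{Ū}, 𝓕^{Ū}} of handpicked tours of G_x^{Ū} (Ū = V_n∖U), such that (i) the pattern profiles of the pseudovertices v_U and v_{Ū} in their respective convex combinations are equal, and (ii) for every tour F ∈ 𝓕^U, F minus the edges incident on v_{Ū} induces a connected multigraph on U. Then x can be written as a convex combination {φ, 𝓕} of handpicked tours of G_x such that (a) φ₂(e) = φ₂^U(e)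 for every e ∈ E(G_x^U), (b) φ₂(e) = φ₂^{Ū}(e) for every e ∈ E(G_x^{Ū}), and (c) |𝓕| ≤ |𝓕^U| + |𝓕^{Ū}|. -/
open scoped Classical

noncomputable section

namespace TSPPaper

variable {V : Type*} [Fintype V] [DecidableEq V]

/-! ### Auxiliary lemmas for Statement 9 -/

open Finset in
/-- Coupling of two finitely supported distributions with matching class marginals. -/
lemma exists_coupling_aux {P : Type*} [DecidableEq P] :
    ∀ (N : ℕ) {m l : ℕ} (pa : Fin m → P) (pb : Fin l → P) (a : Fin m → ℝ) (b : Fin l → ℝ),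
    (∀ i, 0 ≤ a i) → (∀ j, 0 ≤ b j) →
    (∀ p : P, ∑ i ∈ univ.filter (fun i => pa i = p), a i
      = ∑ j ∈ univ.filter (fun j => pb j = p), b j) →
    (univ.filter (fun i => a i ≠ 0)).card + (univ.filter (fun j => b j ≠ 0)).card ≤ N →
    ∃ (k : ℕ) (σ : Fin k → Fin m) (τ : Fin k → Fin l) (lam : Fin k → ℝ),
      k ≤ N ∧ (∀ t, 0 ≤ lam t) ∧ (∀ t, pa (σ t) = pb (τ t)) ∧
      (∀ i, ∑ t ∈ univ.filter (fun t => σ t = i), lam t = a i) ∧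
      (∀ j, ∑ t ∈ univ.filter (fun t => τ t = j), lam t = b j) := by
  intro N
  induction N with
  | zero =>
    intro m l pa pb a b ha hb hmatch hcard
    have h1 : (univ.filter (fun i => a i ≠ 0)).card = 0 := by omega
    have h2 : (univ.filter (fun j => b j ≠ 0)).card = 0 := by omega
    rw [Finset.card_eq_zero] at h1 h2
    have ha0 : ∀ i, a i = 0 := fun i => by
      by_contra h
      have hmem : i ∈ univ.filter (fun i => a i ≠ 0) := Finset.mem_filter.mpr ⟨mem_univ i, h⟩
      rw [h1] at hmem; exact absurd hmem (Finset.notMem_empty i)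
    have hb0 : ∀ j, b j = 0 := fun j => by
      by_contra h
      have hmem : j ∈ univ.filter (fun j => b j ≠ 0) := Finset.mem_filter.mpr ⟨mem_univ j, h⟩
      rw [h2] at hmem; exact absurd hmem (Finset.notMem_empty j)
    exact ⟨0, Fin.elim0, Fin.elim0, Fin.elim0, le_refl 0, fun t => Fin.elim0 t,
      fun t => Fin.elim0 t,
      fun i => (Finset.sum_eq_zero fun t _ => Fin.elim0 t).trans (ha0 i).symm,
      fun j => (Finset.sum_eq_zero fun t _ => Fin.elim0 t).trans (hb0 j).symm⟩
  | succ N ih =>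
    intro m l pa pb a b ha hb hmatch hcard
    by_cases hA : ∀ i, a i = 0
    · have hb0 : ∀ j, b j = 0 := by
        intro j
        have h0 : ∑ j' ∈ univ.filter (fun j' => pb j' = pb j), b j' = 0 := by
          rw [← hmatch]; exact Finset.sum_eq_zero (fun i _ => hA i)
        exact (Finset.sum_eq_zero_iff_of_nonneg (fun j' _ => hb j')).mp h0 j
          (Finset.mem_filter.mpr ⟨mem_univ j, rfl⟩)
      exact ⟨0, Fin.elim0, Fin.elim0, Fin.elim0, Nat.zero_le _, fun t => Fin.elim0 t,
        fun t => Fin.elim0 t,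
        fun i => (Finset.sum_eq_zero fun t _ => Fin.elim0 t).trans (hA i).symm,
        fun j => (Finset.sum_eq_zero fun t _ => Fin.elim0 t).trans (hb0 j).symm⟩
    · push_neg at hA
      obtain ⟨i0, hi0⟩ := hA
      have hi0' : 0 < a i0 := lt_of_le_of_ne (ha i0) (Ne.symm hi0)
      have hclass : 0 < ∑ j ∈ univ.filter (fun j => pb j = pa i0), b j := by
        rw [← hmatch]
        exact lt_of_lt_of_le hi0' (Finset.single_le_sum (fun i _ => ha i)
          (Finset.mem_filter.mpr ⟨mem_univ i0, rfl⟩))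
      have hexj : ∃ j0, pb j0 = pa i0 ∧ 0 < b j0 := by
        by_contra h
        push_neg at h
        refine absurd hclass (not_lt.mpr (Finset.sum_nonpos ?_))
        intro j hj
        exact h j (Finset.mem_filter.mp hj).2
      obtain ⟨j0, hj0p, hj0⟩ := hexj
      set μ0 := min (a i0) (b j0) with hμ0
      have hμ0pos : 0 < μ0 := lt_min hi0' hj0
      set a' := Function.update a i0 (a i0 - μ0) with ha'
      set b' := Function.update b j0 (b j0 - μ0) with hb'
      have ha'v : ∀ i, a' i = if i = i0 then a i0 - μ0 else a i := by
        intro i; by_cases h : i = i0 <;> simp [ha', h, Function.update]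
      have hb'v : ∀ j, b' j = if j = j0 then b j0 - μ0 else b j := by
        intro j; by_cases h : j = j0 <;> simp [hb', h, Function.update]
      have ha'nn : ∀ i, 0 ≤ a' i := by
        intro i; rw [ha'v]; split
        · simp [hμ0]
        · exact ha i
      have hb'nn : ∀ j, 0 ≤ b' j := by
        intro j; rw [hb'v]; split
        · simp [hμ0]
        · exact hb j
      -- class sums
      have hdiffa : ∀ p, ∑ i ∈ univ.filter (fun i => pa i = p), a' i
          = (∑ i ∈ univ.filter (fun i => pa i = p), a i) - (if pa i0 = p then μ0 else 0) := by
        intro p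
        rw [Finset.sum_filter, Finset.sum_filter]
        have : ∀ i, (if pa i = p then a' i else 0)
            = (if pa i = p then a i else 0) - (if i = i0 then (if pa i0 = p then μ0 else 0) else 0) := by
          intro i
          rcases eq_or_ne i i0 with rfl | hne
          · simp [ha'v]
            split <;> ring
          · simp [ha'v, hne]
        rw [Finset.sum_congr rfl (fun i _ => this i), Finset.sum_sub_distrib]
        congr 1
        rw [Finset.sum_ite_eq' univ i0]
        simp
      have hdiffb : ∀ p, ∑ j ∈ univ.filter (fun j => pb j = p), b' j
          = (∑ j ∈ univ.filter (fun j => pb j = p), b j) - (if pb j0 = p then μ0 else 0) := by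
        intro p
        rw [Finset.sum_filter, Finset.sum_filter]
        have : ∀ j, (if pb j = p then b' j else 0)
            = (if pb j = p then b j else 0) - (if j = j0 then (if pb j0 = p then μ0 else 0) else 0) := by
          intro j
          rcases eq_or_ne j j0 with rfl | hne
          · simp [hb'v]
            split <;> ring
          · simp [hb'v, hne]
        rw [Finset.sum_congr rfl (fun j _ => this j), Finset.sum_sub_distrib]
        congr 1
        rw [Finset.sum_ite_eq' univ j0]
        simp
      have hmatch' : ∀ p, ∑ i ∈ univ.filter (fun i => pa i = p), a' i
          = ∑ j ∈ univ.filter (fun j => pb j = p), b' j := by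
        intro p
        rw [hdiffa, hdiffb, hmatch, hj0p]
      -- cardinality
      have hsuba : univ.filter (fun i => a' i ≠ 0) ⊆ univ.filter (fun i => a i ≠ 0) := by
        intro i hi
        rw [Finset.mem_filter] at hi ⊢
        refine ⟨mem_univ i, ?_⟩
        rcases eq_or_ne i i0 with rfl | hne
        · exact hi0
        · rw [ha'v, if_neg hne] at hi; exact hi.2
      have hsubb : univ.filter (fun j => b' j ≠ 0) ⊆ univ.filter (fun j => b j ≠ 0) := by
        intro j hj
        rw [Finset.mem_filter] at hj ⊢
        refine ⟨mem_univ j, ?_⟩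
        rcases eq_or_ne j j0 with rfl | hne
        · exact ne_of_gt hj0
        · rw [hb'v, if_neg hne] at hj; exact hj.2
      have hcard' : (univ.filter (fun i => a' i ≠ 0)).card
          + (univ.filter (fun j => b' j ≠ 0)).card ≤ N := by
        rcases min_cases (a i0) (b j0) with ⟨hm, _⟩ | ⟨hm, _⟩
        · -- a' i0 = 0
          have h3 : μ0 = a i0 := hm
          have hzero : a' i0 = 0 := by rw [ha'v, if_pos rfl, h3, sub_self]
          have hsub2 : univ.filter (fun i => a' i ≠ 0)
              ⊆ (univ.filter (fun i => a i ≠ 0)).erase i0 := by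
            intro i hi
            rw [Finset.mem_erase]
            refine ⟨?_, hsuba hi⟩
            rintro rfl
            exact (Finset.mem_filter.mp hi).2 hzero
          have h1 : (univ.filter (fun i => a' i ≠ 0)).card
              ≤ (univ.filter (fun i => a i ≠ 0)).card - 1 := by
            calc (univ.filter (fun i => a' i ≠ 0)).card
                ≤ ((univ.filter (fun i => a i ≠ 0)).erase i0).card := Finset.card_le_card hsub2
              _ = (univ.filter (fun i => a i ≠ 0)).card - 1 :=
                  Finset.card_erase_of_mem (Finset.mem_filter.mpr ⟨mem_univ i0, hi0⟩)
          have h0 : 1 ≤ (univ.filter (fun i => a i ≠ 0)).card :=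
            Finset.card_pos.mpr ⟨i0, Finset.mem_filter.mpr ⟨mem_univ i0, hi0⟩⟩
          have h2 := Finset.card_le_card hsubb
          omega
        · have h3 : μ0 = b j0 := hm
          have hzero : b' j0 = 0 := by rw [hb'v, if_pos rfl, h3, sub_self]
          have hsub2 : univ.filter (fun j => b' j ≠ 0)
              ⊆ (univ.filter (fun j => b j ≠ 0)).erase j0 := by
            intro j hj
            rw [Finset.mem_erase]
            refine ⟨?_, hsubb hj⟩
            rintro rfl
            exact (Finset.mem_filter.mp hj).2 hzero
          have h1 : (univ.filter (fun j => b' j ≠ 0)).card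
              ≤ (univ.filter (fun j => b j ≠ 0)).card - 1 := by
            calc (univ.filter (fun j => b' j ≠ 0)).card
                ≤ ((univ.filter (fun j => b j ≠ 0)).erase j0).card := Finset.card_le_card hsub2
              _ = (univ.filter (fun j => b j ≠ 0)).card - 1 :=
                  Finset.card_erase_of_mem (Finset.mem_filter.mpr ⟨mem_univ j0, ne_of_gt hj0⟩)
          have h0 : 1 ≤ (univ.filter (fun j => b j ≠ 0)).card :=
            Finset.card_pos.mpr ⟨j0, Finset.mem_filter.mpr ⟨mem_univ j0, ne_of_gt hj0⟩⟩
          have h2 := Finset.card_le_card hsuba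
          omega
      obtain ⟨k', σ', τ', lam', hk', hlam'nn, hclass', hmarga', hmargb'⟩ :=
        ih pa pb a' b' ha'nn hb'nn hmatch' hcard'
      refine ⟨k' + 1, Fin.snoc σ' i0, Fin.snoc τ' j0, Fin.snoc lam' μ0, by omega, ?_, ?_, ?_, ?_⟩
      · intro t
        induction t using Fin.lastCases with
        | last => simp [hμ0pos.le]
        | cast t' => simp [hlam'nn t']
      · intro t
        induction t using Fin.lastCases with
        | last => simp [hj0p]
        | cast t' => simp [hclass' t']
      · intro i
        rw [Finset.sum_filter, Fin.sum_univ_castSucc]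
        simp only [Fin.snoc_castSucc, Fin.snoc_last]
        rw [← Finset.sum_filter, hmarga' i, ha'v]
        rcases eq_or_ne i0 i with rfl | hne
        · rw [if_pos rfl, if_pos rfl]; ring
        · rw [if_neg (Ne.symm hne), if_neg hne]; ring
      · intro j
        rw [Finset.sum_filter, Fin.sum_univ_castSucc]
        simp only [Fin.snoc_castSucc, Fin.snoc_last]
        rw [← Finset.sum_filter, hmargb' j, hb'v]
        rcases eq_or_ne j0 j with rfl | hne
        · rw [if_pos rfl, if_pos rfl]; ring
        · rw [if_neg (Ne.symm hne), if_neg hne]; ring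


open Finset in
lemma marg_sum_comp {k m : ℕ} (σ : Fin k → Fin m) (lam : Fin k → ℝ) (lamU : Fin m → ℝ)
    (h : ∀ i, ∑ t ∈ univ.filter (fun t => σ t = i), lam t = lamU i) (f : Fin m → ℝ) :
    ∑ t, lam t * f (σ t) = ∑ i, lamU i * f i := by
  have key : ∀ i, ∑ t ∈ univ.filter (fun t => σ t = i), lam t * f (σ t) = lamU i * f i := by
    intro i
    rw [← h i, Finset.sum_mul]
    exact Finset.sum_congr rfl fun t ht => by rw [(Finset.mem_filter.mp ht).2]
  rw [← Finset.sum_fiberwise univ σ (fun t => lam t * f (σ t))]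
  exact Finset.sum_congr rfl fun i _ => key i

open Finset in
lemma marg_sum_filter_comp {k m : ℕ} (σ : Fin k → Fin m) (lam : Fin k → ℝ) (lamU : Fin m → ℝ)
    (h : ∀ i, ∑ t ∈ univ.filter (fun t => σ t = i), lam t = lamU i) (p : Fin m → Prop)
    [DecidablePred p] [DecidablePred fun t => p (σ t)] :
    ∑ t ∈ univ.filter (fun t => p (σ t)), lam t = ∑ i ∈ univ.filter p, lamU i := by
  rw [Finset.sum_filter, Finset.sum_filter]
  have key : ∀ i, (if p i then lamU i else 0)
      = ∑ t ∈ univ.filter (fun t => σ t = i), (if p (σ t) then lam t else 0) := by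
    intro i
    have h2 : ∀ t ∈ univ.filter (fun t => σ t = i),
        (if p (σ t) then lam t else 0) = if p i then lam t else 0 := fun t ht => by
      have hsi : σ t = i := (Finset.mem_filter.mp ht).2
      by_cases hp : p i
      · rw [if_pos hp, if_pos (show p (σ t) by rw [hsi]; exact hp)]
      · rw [if_neg (show ¬p (σ t) from fun hc => hp (by rw [← hsi]; exact hc)), if_neg hp]
    rw [Finset.sum_congr rfl h2]
    by_cases hp : p i
    · rw [if_pos hp, ← h i]
      exact (Finset.sum_congr rfl fun t _ => if_pos hp).symm
    · rw [if_neg hp]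
      exact (Finset.sum_eq_zero fun t _ => if_neg hp).symm
  rw [Finset.sum_congr rfl (fun i _ => key i), Finset.sum_fiberwise]

open Finset in
lemma marg_sum_total {k m : ℕ} (σ : Fin k → Fin m) (lam : Fin k → ℝ) (lamU : Fin m → ℝ)
    (h : ∀ i, ∑ t ∈ univ.filter (fun t => σ t = i), lam t = lamU i) :
    ∑ t, lam t = ∑ i, lamU i := by
  rw [← Finset.sum_fiberwise univ σ lam]
  exact Finset.sum_congr rfl fun i _ => h i

/-- Transport reachability along a map sending adjacency to reachability. -/
lemma reachable_transport {α β : Type*} {G : SimpleGraph α} {H : SimpleGraph β} (f : α → β)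
    (hf : ∀ a b, G.Adj a b → H.Reachable (f a) (f b)) {a b : α}
    (hr : G.Reachable a b) : H.Reachable (f a) (f b) := by
  obtain ⟨p⟩ := hr
  induction p with
  | nil => exact SimpleGraph.Reachable.refl _
  | cons hadj _ ih => exact (hf _ _ hadj).trans ih

section ContractLemmas

variable {V : Type*} [Fintype V] [DecidableEq V]

lemma contractMap_some {S : Finset V} {w : V} (h : w ∈ S) :
    contractMap S w = some ⟨w, h⟩ := dif_pos h

lemma contractMap_none {S : Finset V} {w : V} (h : w ∉ S) :
    contractMap S w = none := dif_neg h

lemma contractMap_eq_none_iff {S : Finset V} {w : V} :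
    contractMap S w = none ↔ w ∉ S := by
  by_cases hw : w ∈ S
  · rw [contractMap_some hw]
    simp [hw]
  · rw [contractMap_none hw]
    simp [hw]

lemma contractMap_eq_some_iff {S : Finset V} {w a : V} (ha : a ∈ S) :
    contractMap S w = some ⟨a, ha⟩ ↔ w = a := by
  by_cases hw : w ∈ S
  · rw [contractMap_some hw, Option.some_inj, Subtype.mk.injEq]
  · rw [contractMap_none hw]
    exact iff_of_false (by simp) (fun h => hw (h ▸ ha))

lemma map_pair_eq_internal_iff {S : Finset V} {a b : V} (ha : a ∈ S) (hb : b ∈ S) {c d : V} :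
    Sym2.map (contractMap S) s(c, d) = s((some ⟨a, ha⟩ : Contracted S), some ⟨b, hb⟩)
      ↔ s(c, d) = s(a, b) := by
  rw [Sym2.map_pair_eq, Sym2.eq_iff, Sym2.eq_iff]
  constructor
  · rintro (⟨h1, h2⟩ | ⟨h1, h2⟩)
    · exact Or.inl ⟨(contractMap_eq_some_iff ha).mp h1, (contractMap_eq_some_iff hb).mp h2⟩
    · exact Or.inr ⟨(contractMap_eq_some_iff hb).mp h1, (contractMap_eq_some_iff ha).mp h2⟩
  · rintro (⟨rfl, rfl⟩ | ⟨rfl, rfl⟩)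
    · exact Or.inl ⟨contractMap_some ha, contractMap_some hb⟩
    · exact Or.inr ⟨contractMap_some hb, contractMap_some ha⟩

lemma map_pair_eq_cross_iff {S : Finset V} {v : V} (hv : v ∈ S) {c d : V} :
    Sym2.map (contractMap S) s(c, d) = s((some ⟨v, hv⟩ : Contracted S), none)
      ↔ (c = v ∧ d ∉ S) ∨ (d = v ∧ c ∉ S) := by
  rw [Sym2.map_pair_eq, Sym2.eq_iff]
  constructor
  · rintro (⟨h1, h2⟩ | ⟨h1, h2⟩)
    · exact Or.inl ⟨(contractMap_eq_some_iff hv).mp h1, contractMap_eq_none_iff.mp h2⟩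
    · exact Or.inr ⟨(contractMap_eq_some_iff hv).mp h2, contractMap_eq_none_iff.mp h1⟩
  · rintro (⟨rfl, h⟩ | ⟨rfl, h⟩)
    · exact Or.inl ⟨contractMap_some hv, contractMap_none h⟩
    · exact Or.inr ⟨contractMap_none h, contractMap_some hv⟩

lemma mem_cutEdges_iff {x : Sym2 V → ℝ} {S : Finset V} {e : Sym2 V} :
    e ∈ cutEdges x S ↔ 0 < x e ∧ ∃ u w : V, e = s(u, w) ∧ u ∈ S ∧ w ∉ S := by
  simp only [cutEdges, crossEdges, Finset.mem_filter, Finset.mem_univ, true_and]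
  tauto

lemma crossEdges_compl (S : Finset V) : crossEdges Sᶜ = crossEdges S := by
  have key : ∀ (T : Finset V) (e : Sym2 V), e ∈ crossEdges Tᶜ → e ∈ crossEdges T := by
    intro T e he
    simp only [crossEdges, Finset.mem_filter, Finset.mem_univ, true_and] at he ⊢
    obtain ⟨u, v, rfl, hu, hv⟩ := he
    rw [Finset.mem_compl] at hu
    rw [Finset.mem_compl, not_not] at hv
    exact ⟨v, u, Sym2.eq_swap, hv, hu⟩
  apply Finset.Subset.antisymm
  · exact fun e he => key S e he
  · intro e he
    apply key Sᶜ
    rwa [compl_compl]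

lemma cutEdges_compl (x : Sym2 V → ℝ) (S : Finset V) : cutEdges x Sᶜ = cutEdges x S := by
  unfold cutEdges
  rw [crossEdges_compl]

lemma contractPoint_diag (x : Sym2 V → ℝ) (S : Finset V) {d : Sym2 (Contracted S)}
    (hd : d.IsDiag) : contractPoint x S d = 0 := by
  rw [contractPoint, if_pos hd]

lemma contractPoint_nondiag (x : Sym2 V → ℝ) (S : Finset V) {d : Sym2 (Contracted S)}
    (hd : ¬d.IsDiag) : contractPoint x S d
      = ∑ e ∈ Finset.univ.filter (fun e : Sym2 V => Sym2.map (contractMap S) e = d), x e := by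
  rw [contractPoint, if_neg hd]

lemma contractPoint_map_internal {x : Sym2 V → ℝ} (hdiag : ∀ e : Sym2 V, e.IsDiag → x e = 0)
    {S : Finset V} {a b : V} (ha : a ∈ S) (hb : b ∈ S) :
    contractPoint x S (Sym2.map (contractMap S) s(a, b)) = x s(a, b) := by
  rcases eq_or_ne a b with rfl | hab
  · rw [contractPoint_diag x S (by rw [Sym2.map_pair_eq]; exact Sym2.mk_isDiag_iff.mpr rfl),
      hdiag _ (Sym2.mk_isDiag_iff.mpr rfl)]
  · have hmap : Sym2.map (contractMap S) s(a, b)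
        = s((some ⟨a, ha⟩ : Contracted S), some ⟨b, hb⟩) := by
      rw [Sym2.map_pair_eq, contractMap_some ha, contractMap_some hb]
    have hnd : ¬(Sym2.map (contractMap S) s(a, b)).IsDiag := by
      rw [hmap]
      simp only [Sym2.mk_isDiag_iff, Option.some_inj, Subtype.mk.injEq]
      exact hab
    rw [contractPoint_nondiag x S hnd]
    have hfil : Finset.univ.filter
        (fun e : Sym2 V => Sym2.map (contractMap S) e = Sym2.map (contractMap S) s(a, b))
        = {s(a, b)} := by
      ext e
      induction e using Sym2.ind with
      | _ c d =>
        rw [Finset.mem_filter, Finset.mem_singleton, hmap]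
        simp only [Finset.mem_univ, true_and]
        exact map_pair_eq_internal_iff ha hb
    rw [hfil, Finset.sum_singleton]

lemma contractPoint_map_cutEdge {x : Sym2 V → ℝ} (hnn : ∀ e : Sym2 V, 0 ≤ x e) {S : Finset V}
    (hdisj : ∀ e ∈ cutEdges x S, ∀ f ∈ cutEdges x S, e ≠ f → ∀ w : V, w ∈ e → w ∈ f → False)
    {c : Sym2 V} (hc : c ∈ cutEdges x S) :
    contractPoint x S (Sym2.map (contractMap S) c) = x c := by
  obtain ⟨hpos, u, w, rfl, hu, hw⟩ := mem_cutEdges_iff.mp hc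
  have hmap : Sym2.map (contractMap S) s(u, w)
      = s((some ⟨u, hu⟩ : Contracted S), none) := by
    rw [Sym2.map_pair_eq, contractMap_some hu, contractMap_none hw]
  have hnd : ¬(Sym2.map (contractMap S) s(u, w)).IsDiag := by
    rw [hmap]; simp
  rw [contractPoint_nondiag x S hnd]
  apply Finset.sum_eq_single_of_mem
  · rw [Finset.mem_filter]
    exact ⟨Finset.mem_univ _, rfl⟩
  · intro e he hne
    rw [Finset.mem_filter, hmap] at he
    induction e using Sym2.ind with
    | _ c' d' =>
      have hmem : u ∈ s(c', d') ∧ ∃ u' w' : V, s(c', d') = s(u', w') ∧ u' ∈ S ∧ w' ∉ S := by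
        rcases (map_pair_eq_cross_iff hu).mp he.2 with ⟨rfl, h⟩ | ⟨rfl, h⟩
        · exact ⟨Sym2.mem_mk_left _ _, c', d', rfl, hu, h⟩
        · exact ⟨Sym2.mem_mk_right _ _, d', c', Sym2.eq_swap, hu, h⟩
      by_contra hne0
      have hpos' : 0 < x s(c', d') := lt_of_le_of_ne (hnn _) (Ne.symm hne0)
      have hmem' : s(c', d') ∈ cutEdges x S :=
        mem_cutEdges_iff.mpr ⟨hpos', hmem.2⟩
      exact hdisj _ hmem' _ hc hne u hmem.1 (Sym2.mem_mk_left _ _)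

lemma contractPoint_pseudo_zero {x : Sym2 V → ℝ} {S : Finset V} {v : V} (hv : v ∈ S)
    (h0 : ∀ w, w ∉ S → x s(v, w) = 0) :
    contractPoint x S s((some ⟨v, hv⟩ : Contracted S), none) = 0 := by
  rw [contractPoint_nondiag x S (by simp)]
  apply Finset.sum_eq_zero
  intro e he
  rw [Finset.mem_filter] at he
  induction e using Sym2.ind with
  | _ c' d' =>
    rcases (map_pair_eq_cross_iff hv).mp he.2 with ⟨rfl, h⟩ | ⟨rfl, h⟩
    · exact h0 _ h
    · rw [Sym2.eq_swap]
      exact h0 _ h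

lemma contractPoint_map_suppEdge {x : Sym2 V → ℝ} (hdiag : ∀ e : Sym2 V, e.IsDiag → x e = 0)
    (hnn : ∀ e : Sym2 V, 0 ≤ x e) {S : Finset V}
    (hdisj : ∀ e ∈ cutEdges x S, ∀ f ∈ cutEdges x S, e ≠ f → ∀ w : V, w ∈ e → w ∈ f → False)
    {v : V} (hv : v ∈ S) {e : Sym2 V} (hve : v ∈ e) (hpe : 0 < x e) :
    contractPoint x S (Sym2.map (contractMap S) e) = x e := by
  obtain ⟨b, rfl⟩ := Sym2.mem_iff_exists.mp hve
  by_cases hb : b ∈ S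
  · exact contractPoint_map_internal hdiag hv hb
  · exact contractPoint_map_cutEdge hnn hdisj
      (mem_cutEdges_iff.mpr ⟨hpe, v, b, rfl, hv, hb⟩)

lemma exists_pullback {x : Sym2 V → ℝ} (hdiag : ∀ e : Sym2 V, e.IsDiag → x e = 0)
    (hnn : ∀ e : Sym2 V, 0 ≤ x e) {S : Finset V}
    (hdisj : ∀ e ∈ cutEdges x S, ∀ f ∈ cutEdges x S, e ≠ f → ∀ w : V, w ∈ e → w ∈ f → False)
    {v : V} (hv : v ∈ S) {d : Sym2 (Contracted S)}
    (hvd : (some ⟨v, hv⟩ : Contracted S) ∈ d) (hd : 0 < contractPoint x S d) :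
    ∃ e : Sym2 V, v ∈ e ∧ x e = contractPoint x S d ∧ Sym2.map (contractMap S) e = d := by
  obtain ⟨o, rfl⟩ := Sym2.mem_iff_exists.mp hvd
  match o with
  | some b =>
    refine ⟨s(v, b.1), Sym2.mem_mk_left _ _, ?_, ?_⟩
    · rw [← contractPoint_map_internal hdiag hv b.2]
      congr 1
      rw [Sym2.map_pair_eq, contractMap_some hv, contractMap_some b.2]
    · rw [Sym2.map_pair_eq, contractMap_some hv, contractMap_some b.2]
  | none =>
    have hnd : ¬(s((some ⟨v, hv⟩ : Contracted S), none)).IsDiag := by simp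
    rw [contractPoint_nondiag x S hnd] at hd
    have hex : ∃ e ∈ Finset.univ.filter
        (fun e : Sym2 V => Sym2.map (contractMap S) e = s((some ⟨v, hv⟩ : Contracted S), none)),
        0 < x e := by
      by_contra h
      push_neg at h
      exact absurd hd (not_lt.mpr (Finset.sum_nonpos h))
    obtain ⟨e, he, hpe⟩ := hex
    rw [Finset.mem_filter] at he
    have hve : v ∈ e := by
      induction e using Sym2.ind with
      | _ c' d' =>
        rcases (map_pair_eq_cross_iff hv).mp he.2 with ⟨rfl, _⟩ | ⟨rfl, _⟩
        · exact Sym2.mem_mk_left _ _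
        · exact Sym2.mem_mk_right _ _
    refine ⟨e, hve, ?_, he.2⟩
    rw [← he.2]
    exact (contractPoint_map_suppEdge hdiag hnn hdisj hv hve hpe).symm

lemma pullback_unique {x : Sym2 V → ℝ} {S : Finset V}
    (hdisj : ∀ e ∈ cutEdges x S, ∀ f ∈ cutEdges x S, e ≠ f → ∀ w : V, w ∈ e → w ∈ f → False)
    {v : V} (hv : v ∈ S) {e e' : Sym2 V} (hve : v ∈ e) (hve' : v ∈ e')
    (hpe : 0 < x e) (hpe' : 0 < x e')
    (hm : Sym2.map (contractMap S) e = Sym2.map (contractMap S) e') : e = e' := by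
  obtain ⟨b, rfl⟩ := Sym2.mem_iff_exists.mp hve
  obtain ⟨b', rfl⟩ := Sym2.mem_iff_exists.mp hve'
  rw [Sym2.map_pair_eq, Sym2.map_pair_eq, contractMap_some hv] at hm
  by_cases hb : b ∈ S <;> by_cases hb' : b' ∈ S
  · rw [contractMap_some hb, contractMap_some hb'] at hm
    rcases Sym2.eq_iff.mp hm with ⟨_, h2⟩ | ⟨h1, h2⟩
    · rw [Option.some_inj, Subtype.mk.injEq] at h2
      rw [h2]
    · rw [Option.some_inj, Subtype.mk.injEq] at h1 h2
      rw [h2, ← h1]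
  · rw [contractMap_some hb, contractMap_none hb'] at hm
    rcases Sym2.eq_iff.mp hm with ⟨_, h2⟩ | ⟨h1, _⟩
    · exact absurd h2 (by simp)
    · exact absurd h1 (by simp)
  · rw [contractMap_none hb, contractMap_some hb'] at hm
    rcases Sym2.eq_iff.mp hm with ⟨_, h2⟩ | ⟨_, h2⟩ <;> exact absurd h2 (by simp)
  · by_contra hne
    have h1 : s(v, b) ∈ cutEdges x S := mem_cutEdges_iff.mpr ⟨hpe, v, b, rfl, hv, hb⟩
    have h2 : s(v, b') ∈ cutEdges x S := mem_cutEdges_iff.mpr ⟨hpe', v, b', rfl, hv, hb'⟩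
    exact hdisj _ h1 _ h2 hne v (Sym2.mem_mk_left _ _) (Sym2.mem_mk_left _ _)

end ContractLemmas

/-- Observation `gluenow`. Gluing convex combinations of handpicked tours of
`G_x^U` and `G_x^{Ū}` over a critical cut `U` (with matching pattern profiles at the
pseudovertices and the connectivity condition) gives a convex combination of handpicked tours of
`G_x` preserving the doubled-edge frequencies, with at most `|𝓕^U| + |𝓕^{Ū}|` tours. -/
theorem statement9 (n : ℕ) (hn : 3 ≤ n) (θ : ℝ) (x : Sym2 (Fin n) → ℝ)
    (hx : IsCyclic θ x) (hcubic : ∀ v : Fin n, suppDeg x v = 3)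
    (U : Finset (Fin n)) (hcrit : IsCriticalCut x U)
    (c1 c2 c3 : Sym2 (Fin n))
    (hcut : cutEdges x U = {c1, c2, c3})
    (h12 : c1 ≠ c2) (h13 : c1 ≠ c3) (h23 : c2 ≠ c3) (hc1 : x c1 = 1)
    (kU kW : ℕ)
    (FU : Fin kU → Sym2 (Contracted U) → ℕ) (lamU : Fin kU → ℝ)
    (FW : Fin kW → Sym2 (Contracted Uᶜ) → ℕ) (lamW : Fin kW → ℝ)
    (htU : ∀ i, IsTourSupp (contractPoint x U) (FU i))
    (hhU : ∀ i, Handpicked (contractPoint x U) (FU i))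
    (hlU : ∀ i, 0 ≤ lamU i) (hsU : ∑ i, lamU i = 1)
    (hrU : ∀ d : Sym2 (Contracted U), contractPoint x U d = ∑ i, lamU i * (FU i d : ℝ))
    (htW : ∀ j, IsTourSupp (contractPoint x Uᶜ) (FW j))
    (hhW : ∀ j, Handpicked (contractPoint x Uᶜ) (FW j))
    (hlW : ∀ j, 0 ≤ lamW j) (hsW : ∑ j, lamW j = 1)
    (hrW : ∀ d : Sym2 (Contracted Uᶜ), contractPoint x Uᶜ d = ∑ j, lamW j * (FW j d : ℝ))
    (hprofiles : ∀ p : ℕ × ℕ × ℕ,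
      patFreq lamU FU (Sym2.map (contractMap U) c1) (Sym2.map (contractMap U) c2)
          (Sym2.map (contractMap U) c3) p =
        patFreq lamW FW (Sym2.map (contractMap Uᶜ) c1) (Sym2.map (contractMap Uᶜ) c2)
          (Sym2.map (contractMap Uᶜ) c3) p)
    (hconnU : ∀ i,
      ((supportGraph (FU i)).induce {w : Contracted U | w ≠ none}).Connected) :
    ∃ (k : ℕ) (F : Fin k → Sym2 (Fin n) → ℕ) (lam : Fin k → ℝ),
      (∀ i, IsTourSupp x (F i)) ∧ (∀ i, Handpicked x (F i)) ∧
      (∀ i, 0 ≤ lam i) ∧ (∑ i, lam i = 1) ∧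
      (∀ e : Sym2 (Fin n), x e = ∑ i, lam i * (F i e : ℝ)) ∧
      (∀ e : Sym2 (Fin n), 0 < x e → (∃ w, w ∈ e ∧ w ∈ U) →
        phi2 lam F e = phi2 lamU FU (Sym2.map (contractMap U) e)) ∧
      (∀ e : Sym2 (Fin n), 0 < x e → (∃ w, w ∈ e ∧ w ∉ U) →
        phi2 lam F e = phi2 lamW FW (Sym2.map (contractMap Uᶜ) e)) ∧
      k ≤ kU + kW := by
  classical
  obtain ⟨-, -, hsubt, -, -, -⟩ := hx
  obtain ⟨hdiag, hnn, -, -, -⟩ := hsubt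
  have hdisjU : ∀ e ∈ cutEdges x U, ∀ f ∈ cutEdges x U, e ≠ f →
      ∀ w : Fin n, w ∈ e → w ∈ f → False := hcrit.2.2.2.2
  have hcutW : cutEdges x Uᶜ = {c1, c2, c3} := by rw [cutEdges_compl]; exact hcut
  have hdisjW : ∀ e ∈ cutEdges x Uᶜ, ∀ f ∈ cutEdges x Uᶜ, e ≠ f →
      ∀ w : Fin n, w ∈ e → w ∈ f → False := by
    rw [cutEdges_compl]; exact hdisjU
  have hc1cut : c1 ∈ cutEdges x U := by rw [hcut]; simp
  have hc2cut : c2 ∈ cutEdges x U := by rw [hcut]; simp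
  have hc3cut : c3 ∈ cutEdges x U := by rw [hcut]; simp
  obtain ⟨hc1pos, u1, w1, hc1e, hu1, hw1⟩ := mem_cutEdges_iff.mp hc1cut
  obtain ⟨hc2pos, u2, w2, hc2e, hu2, hw2⟩ := mem_cutEdges_iff.mp hc2cut
  obtain ⟨hc3pos, u3, w3, hc3e, hu3, hw3⟩ := mem_cutEdges_iff.mp hc3cut
  set C : Fin 3 → Sym2 (Fin n) := ![c1, c2, c3] with hCdef
  set us : Fin 3 → Fin n := ![u1, u2, u3] with husdef
  set ws : Fin 3 → Fin n := ![w1, w2, w3] with hwsdef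
  have hCe : ∀ m, C m = s(us m, ws m) := by
    intro m; fin_cases m
    · exact hc1e
    · exact hc2e
    · exact hc3e
  have hus : ∀ m, us m ∈ U := by
    intro m; fin_cases m
    · exact hu1
    · exact hu2
    · exact hu3
  have hws : ∀ m, ws m ∉ U := by
    intro m; fin_cases m
    · exact hw1
    · exact hw2
    · exact hw3
  have hCcut : ∀ m, C m ∈ cutEdges x U := by
    intro m; fin_cases m
    · exact hc1cut
    · exact hc2cut
    · exact hc3cut
  have hCpos : ∀ m, 0 < x (C m) := by
    intro m; fin_cases m
    · exact hc1pos
    · exact hc2pos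
    · exact hc3pos
  have hCne : ∀ m m' : Fin 3, m ≠ m' → C m ≠ C m' := by
    intro m m' hne
    fin_cases m <;> fin_cases m'
    · exact absurd rfl hne
    · exact h12
    · exact h13
    · exact Ne.symm h12
    · exact absurd rfl hne
    · exact h23
    · exact Ne.symm h13
    · exact Ne.symm h23
    · exact absurd rfl hne
  have hmemC : ∀ e : Sym2 (Fin n), e ∈ ({c1, c2, c3} : Finset (Sym2 (Fin n))) ↔ ∃ m, e = C m := by
    intro e
    simp only [Finset.mem_insert, Finset.mem_singleton]
    constructor
    · rintro (rfl | rfl | rfl)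
      exacts [⟨0, rfl⟩, ⟨1, rfl⟩, ⟨2, rfl⟩]
    · rintro ⟨m, rfl⟩
      fin_cases m
      · exact Or.inl rfl
      · exact Or.inr (Or.inl rfl)
      · exact Or.inr (Or.inr rfl)
  have hcrossid : ∀ a b : Fin n, a ∈ U → b ∉ U → ∀ m, s(a, b) = C m → a = us m ∧ b = ws m := by
    intro a b ha hb m h
    rw [hCe m] at h
    rcases Sym2.eq_iff.mp h with ⟨h1, h2⟩ | ⟨h1, h2⟩
    · exact ⟨h1, h2⟩
    · subst h1
      exact absurd ha (hws m)
  have hwsne : ∀ m m' : Fin 3, m ≠ m' → ws m ≠ ws m' := by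
    intro m m' hne he
    exact hdisjU _ (hCcut m) _ (hCcut m') (hCne m m' hne) (ws m)
      (by rw [hCe m]; exact Sym2.mem_mk_right _ _)
      (by rw [hCe m', ← he]; exact Sym2.mem_mk_right _ _)
  have husne : ∀ m m' : Fin 3, m ≠ m' → us m ≠ us m' := by
    intro m m' hne he
    exact hdisjU _ (hCcut m) _ (hCcut m') (hCne m m' hne) (us m)
      (by rw [hCe m]; exact Sym2.mem_mk_left _ _)
      (by rw [hCe m', ← he]; exact Sym2.mem_mk_left _ _)
  have hwsW : ∀ m, ws m ∈ Uᶜ := fun m => Finset.mem_compl.mpr (hws m)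
  have husW : ∀ m, us m ∉ Uᶜ := fun m => by simp [Finset.mem_compl, hus m]
  have hdU : ∀ m, Sym2.map (contractMap U) (C m)
      = s((some ⟨us m, hus m⟩ : Contracted U), none) := by
    intro m
    rw [hCe m, Sym2.map_pair_eq, contractMap_some (hus m), contractMap_none (hws m)]
  have hdW : ∀ m, Sym2.map (contractMap Uᶜ) (C m)
      = s((some ⟨ws m, hwsW m⟩ : Contracted Uᶜ), none) := by
    intro m
    rw [hCe m, Sym2.map_pair_eq, contractMap_some (hwsW m), contractMap_none (husW m)]
    exact Sym2.eq_swap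
  -- the coupling
  obtain ⟨k, σ, τ, lam, hk, hlnn, hclass, hma, hmb⟩ :=
    exists_coupling_aux (kU + kW)
      (fun i => (FU i (Sym2.map (contractMap U) c1), FU i (Sym2.map (contractMap U) c2),
        FU i (Sym2.map (contractMap U) c3)))
      (fun j => (FW j (Sym2.map (contractMap Uᶜ) c1), FW j (Sym2.map (contractMap Uᶜ) c2),
        FW j (Sym2.map (contractMap Uᶜ) c3)))
      lamU lamW hlU hlW (fun p => hprofiles p)
      (by
        have h1 := Finset.card_filter_le Finset.univ (fun i : Fin kU => lamU i ≠ 0)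
        have h2 := Finset.card_filter_le Finset.univ (fun j : Fin kW => lamW j ≠ 0)
        simp only [Finset.card_univ, Fintype.card_fin] at h1 h2
        omega)
  have hccC : ∀ t m, FU (σ t) (Sym2.map (contractMap U) (C m))
      = FW (τ t) (Sym2.map (contractMap Uᶜ) (C m)) := by
    intro t m
    have h := hclass t
    rw [Prod.mk.injEq, Prod.mk.injEq] at h
    fin_cases m
    · exact h.1
    · exact h.2.1
    · exact h.2.2
  -- the glued tours
  set glue : Fin k → Sym2 (Fin n) → ℕ := fun t e =>
    if e = c1 then FU (σ t) (Sym2.map (contractMap U) c1)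
    else if e = c2 then FU (σ t) (Sym2.map (contractMap U) c2)
    else if e = c3 then FU (σ t) (Sym2.map (contractMap U) c3)
    else if (∀ w ∈ e, w ∈ U) then FU (σ t) (Sym2.map (contractMap U) e)
    else if (∀ w ∈ e, w ∉ U) then FW (τ t) (Sym2.map (contractMap Uᶜ) e)
    else 0
    with hgluedef
  have hgc1 : ∀ t, glue t c1 = FU (σ t) (Sym2.map (contractMap U) c1) := by
    intro t; rw [hgluedef]; beta_reduce; rw [if_pos rfl]
  have hgc2 : ∀ t, glue t c2 = FU (σ t) (Sym2.map (contractMap U) c2) := by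
    intro t; rw [hgluedef]; beta_reduce; rw [if_neg (Ne.symm h12), if_pos rfl]
  have hgc3 : ∀ t, glue t c3 = FU (σ t) (Sym2.map (contractMap U) c3) := by
    intro t; rw [hgluedef]; beta_reduce
    rw [if_neg (Ne.symm h13), if_neg (Ne.symm h23), if_pos rfl]
  have hgC : ∀ t m, glue t (C m) = FU (σ t) (Sym2.map (contractMap U) (C m)) := by
    intro t m; fin_cases m
    · exact hgc1 t
    · exact hgc2 t
    · exact hgc3 t
  have hnotc : ∀ e : Sym2 (Fin n), (∀ w ∈ e, w ∈ U) → e ≠ c1 ∧ e ≠ c2 ∧ e ≠ c3 := by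
    intro e he
    refine ⟨?_, ?_, ?_⟩ <;> intro h
    · exact hw1 (he w1 (by rw [h, hc1e]; exact Sym2.mem_mk_right _ _))
    · exact hw2 (he w2 (by rw [h, hc2e]; exact Sym2.mem_mk_right _ _))
    · exact hw3 (he w3 (by rw [h, hc3e]; exact Sym2.mem_mk_right _ _))
  have hnotcW : ∀ e : Sym2 (Fin n), (∀ w ∈ e, w ∉ U) → e ≠ c1 ∧ e ≠ c2 ∧ e ≠ c3 := by
    intro e he
    refine ⟨?_, ?_, ?_⟩ <;> intro h
    · exact he u1 (by rw [h, hc1e]; exact Sym2.mem_mk_left _ _) hu1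
    · exact he u2 (by rw [h, hc2e]; exact Sym2.mem_mk_left _ _) hu2
    · exact he u3 (by rw [h, hc3e]; exact Sym2.mem_mk_left _ _) hu3
  have hgint : ∀ t e, (∀ w ∈ e, w ∈ U) → glue t e = FU (σ t) (Sym2.map (contractMap U) e) := by
    intro t e he
    obtain ⟨h1, h2, h3⟩ := hnotc e he
    simp only [hgluedef]
    rw [if_neg h1, if_neg h2, if_neg h3, if_pos he]
  have hgintW : ∀ t e, (∀ w ∈ e, w ∉ U) →
      glue t e = FW (τ t) (Sym2.map (contractMap Uᶜ) e) := by
    intro t e he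
    obtain ⟨h1, h2, h3⟩ := hnotcW e he
    have h4 : ¬(∀ w ∈ e, w ∈ U) :=
      fun hall => he e.out.1 (Sym2.out_fst_mem e) (hall _ (Sym2.out_fst_mem e))
    simp only [hgluedef]
    rw [if_neg h1, if_neg h2, if_neg h3, if_neg h4, if_pos he]
  have hgcross0 : ∀ t e, e ≠ c1 → e ≠ c2 → e ≠ c3 → ¬(∀ w ∈ e, w ∈ U) →
      ¬(∀ w ∈ e, w ∉ U) → glue t e = 0 := by
    intro t e h1 h2 h3 h4 h5
    simp only [hgluedef]
    rw [if_neg h1, if_neg h2, if_neg h3, if_neg h4, if_neg h5]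
  have hcutid : ∀ e : Sym2 (Fin n), 0 < x e → ¬(∀ w ∈ e, w ∈ U) → ¬(∀ w ∈ e, w ∉ U) →
      ∃ m, e = C m := by
    intro e hpos h4 h5
    push_neg at h4 h5
    obtain ⟨b, hbe, hbU⟩ := h4
    obtain ⟨a, hae, haU⟩ := h5
    obtain ⟨b', rfl⟩ := Sym2.mem_iff_exists.mp hae
    have hb' : b' ∉ U := by
      rcases Sym2.mem_iff.mp hbe with rfl | rfl
      · exact absurd haU hbU
      · exact hbU
    have hmem : s(a, b') ∈ cutEdges x U := mem_cutEdges_iff.mpr ⟨hpos, a, b', rfl, haU, hb'⟩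
    rw [hcut] at hmem
    exact (hmemC _).mp hmem
  have hgU2 : ∀ t e, 0 < x e → (∃ w, w ∈ e ∧ w ∈ U) →
      glue t e = FU (σ t) (Sym2.map (contractMap U) e) := by
    intro t e hpos hex
    obtain ⟨v, hve, hvU⟩ := hex
    by_cases hall : ∀ w ∈ e, w ∈ U
    · exact hgint t e hall
    · have h5 : ¬(∀ w ∈ e, w ∉ U) := fun h => h v hve hvU
      obtain ⟨m, rfl⟩ := hcutid e hpos hall h5
      exact hgC t m
  have hgW2 : ∀ t e, 0 < x e → (∃ w, w ∈ e ∧ w ∉ U) →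
      glue t e = FW (τ t) (Sym2.map (contractMap Uᶜ) e) := by
    intro t e hpos hex
    obtain ⟨v, hve, hvU⟩ := hex
    by_cases hall : ∀ w ∈ e, w ∉ U
    · exact hgintW t e hall
    · have h4 : ¬(∀ w ∈ e, w ∈ U) := fun h => hvU (h v hve)
      obtain ⟨m, rfl⟩ := hcutid e hpos h4 hall
      rw [hgC t m]
      exact hccC t m
  have hx0 : ∀ e : Sym2 (Fin n), ¬(∀ w ∈ e, w ∈ U) → ¬(∀ w ∈ e, w ∉ U) →
      (∀ m, e ≠ C m) → x e = 0 := by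
    intro e h4 h5 hne
    by_contra h
    obtain ⟨m, hm⟩ := hcutid e (lt_of_le_of_ne (hnn e) (Ne.symm h)) h4 h5
    exact hne m hm
  have hFUp0 : ∀ i (v : Fin n) (hv : v ∈ U), (∀ m, v ≠ us m) →
      FU i s((some ⟨v, hv⟩ : Contracted U), none) = 0 := by
    intro i v hv hvne
    by_contra h
    have hpos := (htU i).2 _ h
    have hzero : contractPoint x U s((some ⟨v, hv⟩ : Contracted U), none) = 0 := by
      apply contractPoint_pseudo_zero hv
      intro w hw
      by_contra hxw
      have hpos' : 0 < x s(v, w) := lt_of_le_of_ne (hnn _) (Ne.symm hxw)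
      have hmem : s(v, w) ∈ cutEdges x U := mem_cutEdges_iff.mpr ⟨hpos', v, w, rfl, hv, hw⟩
      rw [hcut] at hmem
      obtain ⟨m, hm⟩ := (hmemC _).mp hmem
      exact hvne m (hcrossid v w hv hw m hm).1
    rw [hzero] at hpos
    exact lt_irrefl 0 hpos
  have hFWp0 : ∀ j (v : Fin n) (hv : v ∈ Uᶜ), (∀ m, v ≠ ws m) →
      FW j s((some ⟨v, hv⟩ : Contracted Uᶜ), none) = 0 := by
    intro j v hv hvne
    by_contra h
    have hpos := (htW j).2 _ h
    have hzero : contractPoint x Uᶜ s((some ⟨v, hv⟩ : Contracted Uᶜ), none) = 0 := by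
      apply contractPoint_pseudo_zero hv
      intro w hw
      by_contra hxw
      have hpos' : 0 < x s(v, w) := lt_of_le_of_ne (hnn _) (Ne.symm hxw)
      have hmem : s(v, w) ∈ cutEdges x Uᶜ := mem_cutEdges_iff.mpr ⟨hpos', v, w, rfl, hv, hw⟩
      rw [hcutW] at hmem
      obtain ⟨m, hm⟩ := (hmemC _).mp hmem
      have hvU : v ∉ U := Finset.mem_compl.mp hv
      have hwU : w ∈ U := by simpa using hw
      have hid := hcrossid w v hwU hvU m (by rw [Sym2.eq_swap]; exact hm)
      exact hvne m hid.2
    rw [hzero] at hpos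
    exact lt_irrefl 0 hpos
  have hgcross0' : ∀ t (a b : Fin n), a ∈ U → b ∉ U → (∀ m, ¬(a = us m ∧ b = ws m)) →
      glue t s(a, b) = 0 := by
    intro t a b ha hb hm
    have hne : ∀ m, s(a, b) ≠ C m := fun m h => hm m (hcrossid a b ha hb m h)
    have h4 : ¬(∀ w ∈ s(a, b), w ∈ U) := fun h => hb (h b (Sym2.mem_mk_right _ _))
    have h5 : ¬(∀ w ∈ s(a, b), w ∉ U) := fun h => h a (Sym2.mem_mk_left _ _) ha
    exact hgcross0 t _ (hne 0) (hne 1) (hne 2) h4 h5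
  -- degree identities
  have hdegU : ∀ t (v : Fin n) (hv : v ∈ U),
      multiDeg (glue t) v = multiDeg (FU (σ t)) (some ⟨v, hv⟩) := by
    intro t v hv
    have hpiece1 : ∑ u ∈ U, glue t s(v, u)
        = ∑ a : {u // u ∈ U}, FU (σ t) s((some ⟨v, hv⟩ : Contracted U), some a) := by
      rw [← Finset.sum_coe_sort U (fun u => glue t s(v, u))]
      apply Finset.sum_congr rfl
      intro a _
      rw [hgint t s(v, a.1)
        (by intro w hw; rcases Sym2.mem_iff.mp hw with rfl | rfl; exacts [hv, a.2]),
        Sym2.map_pair_eq, contractMap_some hv, contractMap_some a.2]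
    have hpiece2 : ∑ u ∈ Uᶜ, glue t s(v, u)
        = FU (σ t) s((some ⟨v, hv⟩ : Contracted U), none) := by
      by_cases hvm : ∃ m, v = us m
      · obtain ⟨m, rfl⟩ := hvm
        have h0 : ∀ u ∈ Uᶜ, u ≠ ws m → glue t s(us m, u) = 0 := by
          intro u hu hne
          refine hgcross0' t (us m) u (hus m) (Finset.mem_compl.mp hu) ?_
          rintro r ⟨h1, h2⟩
          rcases eq_or_ne r m with rfl | hrm
          · exact hne h2
          · exact husne m r (Ne.symm hrm) h1
        rw [Finset.sum_eq_single_of_mem (ws m) (Finset.mem_compl.mpr (hws m)) h0,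
          ← hCe m, hgC t m, hdU m]
      · push_neg at hvm
        rw [hFUp0 (σ t) v hv hvm]
        apply Finset.sum_eq_zero
        intro u hu
        refine hgcross0' t v u hv (Finset.mem_compl.mp hu) ?_
        rintro r ⟨h1, h2⟩
        exact hvm r h1
    simp only [multiDeg]
    rw [← Finset.sum_add_sum_compl U (fun u => glue t s(v, u)), hpiece1, hpiece2,
      Fintype.sum_option (fun o => FU (σ t) s((some ⟨v, hv⟩ : Contracted U), o))]
    exact Nat.add_comm _ _
  have hdegW : ∀ t (v : Fin n) (hv : v ∉ U),
      multiDeg (glue t) v = multiDeg (FW (τ t)) (some ⟨v, Finset.mem_compl.mpr hv⟩) := by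
    intro t v hv
    have hv' : v ∈ Uᶜ := Finset.mem_compl.mpr hv
    have hpiece1 : ∑ u ∈ Uᶜ, glue t s(v, u)
        = ∑ a : {u // u ∈ Uᶜ}, FW (τ t) s((some ⟨v, hv'⟩ : Contracted Uᶜ), some a) := by
      rw [← Finset.sum_coe_sort Uᶜ (fun u => glue t s(v, u))]
      apply Finset.sum_congr rfl
      intro a _
      rw [hgintW t s(v, a.1)
        (by intro w hw; rcases Sym2.mem_iff.mp hw with rfl | rfl;
            exacts [hv, Finset.mem_compl.mp a.2]),
        Sym2.map_pair_eq, contractMap_some hv', contractMap_some a.2]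
    have hpiece2 : ∑ u ∈ U, glue t s(v, u)
        = FW (τ t) s((some ⟨v, hv'⟩ : Contracted Uᶜ), none) := by
      by_cases hvm : ∃ m, v = ws m
      · obtain ⟨m, rfl⟩ := hvm
        have h0 : ∀ u ∈ U, u ≠ us m → glue t s(ws m, u) = 0 := by
          intro u hu hne
          rw [Sym2.eq_swap]
          refine hgcross0' t u (ws m) hu (hws m) ?_
          rintro r ⟨h1, h2⟩
          rcases eq_or_ne r m with rfl | hrm
          · exact hne h1
          · exact hwsne m r (Ne.symm hrm) h2
        rw [Finset.sum_eq_single_of_mem (us m) (hus m) h0]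
        have hswap : s(ws m, us m) = C m := by rw [hCe m]; exact Sym2.eq_swap
        rw [hswap, hgC t m, hccC t m, hdW m]
      · push_neg at hvm
        rw [hFWp0 (τ t) v hv' hvm]
        apply Finset.sum_eq_zero
        intro u hu
        rw [Sym2.eq_swap]
        refine hgcross0' t u v hu hv ?_
        rintro r ⟨h1, h2⟩
        exact hvm r h2
    simp only [multiDeg]
    rw [← Finset.sum_add_sum_compl Uᶜ (fun u => glue t s(v, u)), compl_compl, hpiece1, hpiece2,
      Fintype.sum_option (fun o => FW (τ t) s((some ⟨v, hv'⟩ : Contracted Uᶜ), o))]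
    exact Nat.add_comm _ _
  -- tour properties
  have hgdiag : ∀ t (e : Sym2 (Fin n)), e.IsDiag → glue t e = 0 := by
    intro t e hd
    induction e using Sym2.ind with
    | _ a b =>
      have hab : a = b := Sym2.mk_isDiag_iff.mp hd
      subst hab
      by_cases ha : a ∈ U
      · rw [hgint t _ (fun w hw => by rcases Sym2.mem_iff.mp hw with rfl | rfl <;> exact ha)]
        exact (htU (σ t)).1.1 _ (by rw [Sym2.map_pair_eq]; exact Sym2.mk_isDiag_iff.mpr rfl)
      · rw [hgintW t _ (fun w hw => by rcases Sym2.mem_iff.mp hw with rfl | rfl <;> exact ha)]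
        exact (htW (τ t)).1.1 _ (by rw [Sym2.map_pair_eq]; exact Sym2.mk_isDiag_iff.mpr rfl)
  have hgsupp : ∀ t (e : Sym2 (Fin n)), glue t e ≠ 0 → 0 < x e := by
    intro t e hne
    induction e using Sym2.ind with
    | _ a b =>
      by_cases h1 : s(a, b) = c1
      · rw [h1]; exact hc1pos
      by_cases h2 : s(a, b) = c2
      · rw [h2]; exact hc2pos
      by_cases h3 : s(a, b) = c3
      · rw [h3]; exact hc3pos
      by_cases h4 : ∀ w ∈ s(a, b), w ∈ U
      · rw [hgint t _ h4] at hne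
        have hpos := (htU (σ t)).2 _ hne
        rwa [contractPoint_map_internal hdiag (h4 a (Sym2.mem_mk_left _ _))
          (h4 b (Sym2.mem_mk_right _ _))] at hpos
      by_cases h5 : ∀ w ∈ s(a, b), w ∉ U
      · rw [hgintW t _ h5] at hne
        have hpos := (htW (τ t)).2 _ hne
        rwa [contractPoint_map_internal hdiag
          (Finset.mem_compl.mpr (h5 a (Sym2.mem_mk_left _ _)))
          (Finset.mem_compl.mpr (h5 b (Sym2.mem_mk_right _ _)))] at hpos
      · rw [hgcross0 t _ h1 h2 h3 h4 h5] at hne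
        exact absurd rfl hne
  -- connectivity
  have hreachU : ∀ t (p q : Fin n), p ∈ U → q ∈ U →
      (supportGraph (glue t)).Reachable p q := by
    intro t p q hp hq
    set f : {w : Contracted U // w ≠ none} → Fin n :=
      fun a => ((a.1).getD ⟨u1, hu1⟩).1 with hfdef
    have hstep : ∀ a b, ((supportGraph (FU (σ t))).induce {w : Contracted U | w ≠ none}).Adj a b →
        (supportGraph (glue t)).Adj (f a) (f b) := by
      intro a b hab
      obtain ⟨pa', hpa⟩ := Option.ne_none_iff_exists'.mp a.2
      obtain ⟨pb', hpb⟩ := Option.ne_none_iff_exists'.mp b.2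
      have hadj : (supportGraph (FU (σ t))).Adj a.1 b.1 := hab
      rw [hpa, hpb] at hadj
      obtain ⟨hne', hpos⟩ := hadj
      have hfa : f a = pa'.1 := by simp only [hfdef, hpa, Option.getD_some]
      have hfb : f b = pb'.1 := by simp only [hfdef, hpb, Option.getD_some]
      rw [hfa, hfb]
      refine ⟨fun h => hne' (congrArg some (Subtype.ext h)), ?_⟩
      rw [hgint t s(pa'.1, pb'.1)
        (by intro w hw; rcases Sym2.mem_iff.mp hw with rfl | rfl; exacts [pa'.2, pb'.2]),
        Sym2.map_pair_eq, contractMap_some pa'.2, contractMap_some pb'.2]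
      exact hpos
    have h1 : ((supportGraph (FU (σ t))).induce {w : Contracted U | w ≠ none}).Reachable
        ⟨some ⟨p, hp⟩, by simp⟩ ⟨some ⟨q, hq⟩, by simp⟩ := (hconnU (σ t)).preconnected _ _
    exact reachable_transport f (fun a b h => (hstep a b h).reachable) h1
  have hsn : ∀ t (a : {u // u ∈ Uᶜ}), 0 < FW (τ t) s(some a, none) →
      (supportGraph (glue t)).Reachable a.1 u1 := by
    intro t a hpos
    have hm : ∃ m, a.1 = ws m := by
      by_contra hno
      push_neg at hno
      have h0 := hFWp0 (τ t) a.1 a.2 hno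
      exact (Nat.pos_iff_ne_zero.mp hpos) h0
    obtain ⟨m, ham⟩ := hm
    have hCpos' : 0 < glue t (C m) := by
      rw [hgC t m, hccC t m, hdW m]
      have heq : (⟨ws m, hwsW m⟩ : {u // u ∈ Uᶜ}) = a := Subtype.ext ham.symm
      rw [heq]
      exact hpos
    have hadj : (supportGraph (glue t)).Adj (ws m) (us m) := by
      refine ⟨fun h => (hws m) (h ▸ hus m), ?_⟩
      have hswap : s(ws m, us m) = C m := by rw [hCe m]; exact Sym2.eq_swap
      rw [hswap]
      exact hCpos'
    have hr1 : (supportGraph (glue t)).Reachable a.1 (us m) := by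
      rw [ham]; exact hadj.reachable
    exact hr1.trans (hreachU t (us m) u1 (hus m) hu1)
  have hreachWstep : ∀ t (o o' : Contracted Uᶜ), (supportGraph (FW (τ t))).Adj o o' →
      (supportGraph (glue t)).Reachable (o.elim u1 (fun b => b.1))
        (o'.elim u1 (fun b => b.1)) := by
    intro t o o' h
    match o, o' with
    | none, none => exact absurd rfl h.1
    | some a, some b =>
      obtain ⟨hne', hpos⟩ := h
      apply SimpleGraph.Adj.reachable
      refine ⟨fun hh => hne' (congrArg some (Subtype.ext hh)), ?_⟩
      show 0 < glue t s(a.1, b.1)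
      rw [hgintW t s(a.1, b.1)
        (by intro w hw; rcases Sym2.mem_iff.mp hw with rfl | rfl;
            exacts [Finset.mem_compl.mp a.2, Finset.mem_compl.mp b.2]),
        Sym2.map_pair_eq, contractMap_some a.2, contractMap_some b.2]
      exact hpos
    | some a, none => exact hsn t a h.2
    | none, some a =>
      have hpos : 0 < FW (τ t) s(some a, none) := by
        rw [Sym2.eq_swap]; exact h.2
      exact (hsn t a hpos).symm
  have hconn : ∀ t, (supportGraph (glue t)).Connected := by
    intro t
    rw [SimpleGraph.connected_iff]
    refine ⟨?_, ⟨u1⟩⟩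
    intro p q
    have hWreach : ∀ q' : Fin n, q' ∉ U → (supportGraph (glue t)).Reachable u1 q' := by
      intro q' hq'
      have h1 : (supportGraph (FW (τ t))).Reachable none (some ⟨q', Finset.mem_compl.mpr hq'⟩) :=
        ((htW (τ t)).1.2.2).preconnected _ _
      exact reachable_transport (fun o : Contracted Uᶜ => o.elim u1 (fun b => b.1))
        (hreachWstep t) h1
    by_cases hp : p ∈ U <;> by_cases hq : q ∈ U
    · exact hreachU t p q hp hq
    · exact (hreachU t p u1 hp hu1).trans (hWreach q hq)
    · exact ((hreachU t q u1 hq hu1).trans (hWreach p hp)).symm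
    · exact ((hWreach p hp).symm).trans (hWreach q hq)
  have htour : ∀ t, IsTourSupp x (glue t) := by
    intro t
    refine ⟨⟨hgdiag t, ?_, hconn t⟩, fun e h => hgsupp t e h⟩
    intro v
    by_cases hv : v ∈ U
    · rw [hdegU t v hv]; exact (htU (σ t)).1.2.1 _
    · rw [hdegW t v hv]; exact (htW (τ t)).1.2.1 _
  -- handpickedness
  have hhand : ∀ t, Handpicked x (glue t) := by
    intro t v
    by_cases hv : v ∈ U
    · obtain ⟨e', f', g', hve', hvf', hvg', hef', heg', hfg', he1, hfp, hfl, hgp, hgl, hclos,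
        hpat⟩ := hhU (σ t) (some ⟨v, hv⟩)
      obtain ⟨e, hve, hxe, hme⟩ := exists_pullback hdiag hnn hdisjU hv hve'
        (by rw [he1]; norm_num)
      obtain ⟨f, hvf, hxf, hmf⟩ := exists_pullback hdiag hnn hdisjU hv hvf' hfp
      obtain ⟨g, hvg, hxg, hmg⟩ := exists_pullback hdiag hnn hdisjU hv hvg' hgp
      have hxe1 : x e = 1 := by rw [hxe, he1]
      have hxepos : 0 < x e := by rw [hxe1]; norm_num
      have hxfp : 0 < x f := by rw [hxf]; exact hfp
      have hxfl : x f < 1 := by rw [hxf]; exact hfl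
      have hxgp : 0 < x g := by rw [hxg]; exact hgp
      have hxgl : x g < 1 := by rw [hxg]; exact hgl
      refine ⟨e, f, g, hve, hvf, hvg,
        fun h => hef' (by rw [← hme, ← hmf, h]),
        fun h => heg' (by rw [← hme, ← hmg, h]),
        fun h => hfg' (by rw [← hmf, ← hmg, h]),
        hxe1, hxfp, hxfl, hxgp, hxgl, ?_, ?_⟩
      · intro e'' hpos'' hv''
        have hcp : contractPoint x U (Sym2.map (contractMap U) e'') = x e'' :=
          contractPoint_map_suppEdge hdiag hnn hdisjU hv hv'' hpos''
        have hmm : (some ⟨v, hv⟩ : Contracted U) ∈ Sym2.map (contractMap U) e'' :=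
          Sym2.mem_map.mpr ⟨v, hv'', contractMap_some hv⟩
        rcases hclos _ (by rw [hcp]; exact hpos'') hmm with h | h | h
        · exact Or.inl (pullback_unique hdisjU hv hv'' hve hpos'' hxepos (h.trans hme.symm))
        · exact Or.inr (Or.inl
            (pullback_unique hdisjU hv hv'' hvf hpos'' hxfp (h.trans hmf.symm)))
        · exact Or.inr (Or.inr
            (pullback_unique hdisjU hv hv'' hvg hpos'' hxgp (h.trans hmg.symm)))
      · rw [hgU2 t e hxepos ⟨v, hve, hv⟩, hme, hgU2 t f hxfp ⟨v, hvf, hv⟩, hmf,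
          hgU2 t g hxgp ⟨v, hvg, hv⟩, hmg]
        exact hpat
    · have hv' : v ∈ Uᶜ := Finset.mem_compl.mpr hv
      obtain ⟨e', f', g', hve', hvf', hvg', hef', heg', hfg', he1, hfp, hfl, hgp, hgl, hclos,
        hpat⟩ := hhW (τ t) (some ⟨v, hv'⟩)
      obtain ⟨e, hve, hxe, hme⟩ := exists_pullback hdiag hnn hdisjW hv' hve'
        (by rw [he1]; norm_num)
      obtain ⟨f, hvf, hxf, hmf⟩ := exists_pullback hdiag hnn hdisjW hv' hvf' hfp
      obtain ⟨g, hvg, hxg, hmg⟩ := exists_pullback hdiag hnn hdisjW hv' hvg' hgp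
      have hxe1 : x e = 1 := by rw [hxe, he1]
      have hxepos : 0 < x e := by rw [hxe1]; norm_num
      have hxfp : 0 < x f := by rw [hxf]; exact hfp
      have hxfl : x f < 1 := by rw [hxf]; exact hfl
      have hxgp : 0 < x g := by rw [hxg]; exact hgp
      have hxgl : x g < 1 := by rw [hxg]; exact hgl
      refine ⟨e, f, g, hve, hvf, hvg,
        fun h => hef' (by rw [← hme, ← hmf, h]),
        fun h => heg' (by rw [← hme, ← hmg, h]),
        fun h => hfg' (by rw [← hmf, ← hmg, h]),
        hxe1, hxfp, hxfl, hxgp, hxgl, ?_, ?_⟩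
      · intro e'' hpos'' hv''
        have hcp : contractPoint x Uᶜ (Sym2.map (contractMap Uᶜ) e'') = x e'' :=
          contractPoint_map_suppEdge hdiag hnn hdisjW hv' hv'' hpos''
        have hmm : (some ⟨v, hv'⟩ : Contracted Uᶜ) ∈ Sym2.map (contractMap Uᶜ) e'' :=
          Sym2.mem_map.mpr ⟨v, hv'', contractMap_some hv'⟩
        rcases hclos _ (by rw [hcp]; exact hpos'') hmm with h | h | h
        · exact Or.inl (pullback_unique hdisjW hv' hv'' hve hpos'' hxepos (h.trans hme.symm))
        · exact Or.inr (Or.inl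
            (pullback_unique hdisjW hv' hv'' hvf hpos'' hxfp (h.trans hmf.symm)))
        · exact Or.inr (Or.inr
            (pullback_unique hdisjW hv' hv'' hvg hpos'' hxgp (h.trans hmg.symm)))
      · rw [hgW2 t e hxepos ⟨v, hve, hv⟩, hme, hgW2 t f hxfp ⟨v, hvf, hv⟩, hmf,
          hgW2 t g hxgp ⟨v, hvg, hv⟩, hmg]
        exact hpat
  -- decomposition
  have hkeyCross : ∀ a b : Fin n, a ∈ U → b ∉ U →
      x s(a, b) = ∑ t, lam t * (glue t s(a, b) : ℝ) := by
    intro a b ha hb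
    by_cases hC : ∃ m, s(a, b) = C m
    · obtain ⟨m, hm⟩ := hC
      rw [hm]
      calc x (C m) = contractPoint x U (Sym2.map (contractMap U) (C m)) :=
            (contractPoint_map_cutEdge hnn hdisjU (hCcut m)).symm
        _ = ∑ i, lamU i * (FU i (Sym2.map (contractMap U) (C m)) : ℝ) := hrU _
        _ = ∑ t, lam t * (FU (σ t) (Sym2.map (contractMap U) (C m)) : ℝ) :=
            (marg_sum_comp σ lam lamU hma _).symm
        _ = ∑ t, lam t * (glue t (C m) : ℝ) :=
            Finset.sum_congr rfl fun t _ => by rw [hgC t m]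
    · push_neg at hC
      have h4 : ¬(∀ w ∈ s(a, b), w ∈ U) := fun h => hb (h b (Sym2.mem_mk_right _ _))
      have h5 : ¬(∀ w ∈ s(a, b), w ∉ U) := fun h => h a (Sym2.mem_mk_left _ _) ha
      rw [hx0 _ h4 h5 hC]
      exact (Finset.sum_eq_zero fun t _ => by
        rw [hgcross0 t _ (hC 0) (hC 1) (hC 2) h4 h5]
        simp).symm
  have hdec : ∀ e : Sym2 (Fin n), x e = ∑ t, lam t * (glue t e : ℝ) := by
    intro e
    induction e using Sym2.ind with
    | _ a b =>
      by_cases ha : a ∈ U <;> by_cases hb : b ∈ U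
      · calc x s(a, b) = contractPoint x U (Sym2.map (contractMap U) s(a, b)) :=
              (contractPoint_map_internal hdiag ha hb).symm
          _ = ∑ i, lamU i * (FU i (Sym2.map (contractMap U) s(a, b)) : ℝ) := hrU _
          _ = ∑ t, lam t * (FU (σ t) (Sym2.map (contractMap U) s(a, b)) : ℝ) :=
              (marg_sum_comp σ lam lamU hma _).symm
          _ = ∑ t, lam t * (glue t s(a, b) : ℝ) :=
              Finset.sum_congr rfl fun t _ => by
                rw [hgint t s(a, b)
                  (fun w hw => by rcases Sym2.mem_iff.mp hw with rfl | rfl; exacts [ha, hb])]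
      · exact hkeyCross a b ha hb
      · rw [Sym2.eq_swap]
        exact hkeyCross b a hb ha
      · have ha' : a ∈ Uᶜ := Finset.mem_compl.mpr ha
        have hb' : b ∈ Uᶜ := Finset.mem_compl.mpr hb
        calc x s(a, b) = contractPoint x Uᶜ (Sym2.map (contractMap Uᶜ) s(a, b)) :=
              (contractPoint_map_internal hdiag ha' hb').symm
          _ = ∑ j, lamW j * (FW j (Sym2.map (contractMap Uᶜ) s(a, b)) : ℝ) := hrW _
          _ = ∑ t, lam t * (FW (τ t) (Sym2.map (contractMap Uᶜ) s(a, b)) : ℝ) :=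
              (marg_sum_comp τ lam lamW hmb _).symm
          _ = ∑ t, lam t * (glue t s(a, b) : ℝ) :=
              Finset.sum_congr rfl fun t _ => by
                rw [hgintW t s(a, b)
                  (fun w hw => by rcases Sym2.mem_iff.mp hw with rfl | rfl; exacts [ha, hb])]
  -- phi2 identities
  have hphiU : ∀ e : Sym2 (Fin n), 0 < x e → (∃ w, w ∈ e ∧ w ∈ U) →
      phi2 lam glue e = phi2 lamU FU (Sym2.map (contractMap U) e) := by
    intro e hpos hex
    unfold phi2
    rw [Finset.filter_congr (fun t _ => by rw [hgU2 t e hpos hex])]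
    exact marg_sum_filter_comp σ lam lamU hma
      (fun i => FU i (Sym2.map (contractMap U) e) = 2)
  have hphiW : ∀ e : Sym2 (Fin n), 0 < x e → (∃ w, w ∈ e ∧ w ∉ U) →
      phi2 lam glue e = phi2 lamW FW (Sym2.map (contractMap Uᶜ) e) := by
    intro e hpos hex
    unfold phi2
    rw [Finset.filter_congr (fun t _ => by rw [hgW2 t e hpos hex])]
    exact marg_sum_filter_comp τ lam lamW hmb
      (fun j => FW j (Sym2.map (contractMap Uᶜ) e) = 2)
  exact ⟨k, glue, lam, htour, hhand, hlnn,
    by rw [marg_sum_total σ lam lamU hma]; exact hsU,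
    hdec, hphiU, hphiW, hk⟩


end TSPPaper
end
end

section
/- Let G = (V, E) be a graph, let O ⊆ V with |O| even, and let z ∈ O-JOIN(G) satisfy z(δ(u)) ≤ 1 for all u ∈ V. Then z can be written as a convex combination of O-joins of G in which every O-join J satisfies |J ∩ δ(u)| = 1 for every u ∈ O. -/
open scoped Classical

noncomputable section

namespace TSPPaper

variable {V : Type*} [Fintype V] [DecidableEq V]

/-- Observation `humbleobservation`. If `z` lies in the `O`-join polytope of
`G` and `z(δ(u)) ≤ 1` for every vertex `u`, then `z` is a convex combination of `O`-joins each of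
which uses exactly one edge at every vertex of `O`. -/
theorem statement16 {V : Type*} [Fintype V] [DecidableEq V]
    (G : SimpleGraph V) (O : Finset V) (hO : Even O.card)
    (z : Sym2 V → ℝ)
    (hz : ∃ (k : ℕ) (J : Fin k → Finset (Sym2 V)) (lam : Fin k → ℝ),
      (∀ i, IsOJoinOfGraph G O (J i)) ∧ (∀ i, 0 ≤ lam i) ∧ (∑ i, lam i = 1) ∧
      (∀ e : Sym2 V, z e = ∑ i, lam i * (if e ∈ J i then (1 : ℝ) else 0)))
    (hzdeg : ∀ u : V, (∑ w ∈ Finset.univ.erase u, z s(u, w)) ≤ 1) :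
    ∃ (k : ℕ) (J : Fin k → Finset (Sym2 V)) (lam : Fin k → ℝ),
      (∀ i, IsOJoinOfGraph G O (J i)) ∧ (∀ i, 0 ≤ lam i) ∧ (∑ i, lam i = 1) ∧
      (∀ e : Sym2 V, z e = ∑ i, lam i * (if e ∈ J i then (1 : ℝ) else 0)) ∧
      (∀ i, ∀ u ∈ O, ((J i).filter fun e => u ∈ e).card = 1) := by
  obtain ⟨k, J, lam, hJ, hlam, hsum, hzeq⟩ := hz
  -- degree of vertex u in join i, as a cardinality
  set d : Fin k → V → ℕ := fun i u => ((J i).filter fun e => u ∈ e).card with hd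
  -- Claim A: counting incident edges via neighbours
  have hcard : ∀ i u, ((Finset.univ.erase u).filter fun w => s(u, w) ∈ J i).card = d i u := by
    intro i u
    apply Finset.card_bij (fun w _ => s(u, w))
    · intro w hw
      rw [Finset.mem_filter] at hw ⊢
      exact ⟨hw.2, Sym2.mem_mk_left u w⟩
    · intro w1 h1 w2 h2 h
      exact Sym2.congr_right.mp h
    · intro e he
      rw [Finset.mem_filter] at he
      obtain ⟨heJ, hue⟩ := he
      have hnd : ¬ e.IsDiag := G.not_isDiag_of_mem_edgeSet ((hJ i).1 e heJ)
      refine ⟨Sym2.Mem.other' hue, ?_, Sym2.other_spec' hue⟩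
      rw [Finset.mem_filter, Finset.mem_erase]
      refine ⟨⟨?_, Finset.mem_univ _⟩, by rw [Sym2.other_spec' hue]; exact heJ⟩
      intro hco
      rw [← Sym2.other_eq_other' hue] at hco
      exact Sym2.other_ne hnd hue hco
  -- Claim B: z(δ(u)) = ∑ i, lam i * d i u
  have hB : ∀ u : V, (∑ w ∈ Finset.univ.erase u, z s(u, w)) = ∑ i, lam i * (d i u : ℝ) := by
    intro u
    calc (∑ w ∈ Finset.univ.erase u, z s(u, w))
        = ∑ w ∈ Finset.univ.erase u, ∑ i, lam i * (if s(u, w) ∈ J i then (1 : ℝ) else 0) := by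
          exact Finset.sum_congr rfl fun w _ => hzeq s(u, w)
      _ = ∑ i, ∑ w ∈ Finset.univ.erase u, lam i * (if s(u, w) ∈ J i then (1 : ℝ) else 0) :=
          Finset.sum_comm
      _ = ∑ i, lam i * (d i u : ℝ) := by
          refine Finset.sum_congr rfl fun i _ => ?_
          rw [← Finset.mul_sum, Finset.sum_boole, hcard]
  -- Claim C: degree at least 1 at vertices of O
  have hC : ∀ i, ∀ u ∈ O, 1 ≤ d i u := by
    intro i u hu
    have h1 : Odd (d i u) := ((hJ i).2 u).mpr hu
    exact h1.pos
  -- Claim D: positive-weight joins have degree exactly 1 at vertices of O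
  have hD : ∀ i, lam i ≠ 0 → ∀ u ∈ O, d i u = 1 := by
    intro i hi u hu
    by_contra hne
    have h2 : 2 ≤ d i u := by have := hC i u hu; omega
    have hlampos : 0 < lam i := lt_of_le_of_ne (hlam i) (Ne.symm hi)
    have hlow : ∀ j ∈ Finset.univ, (0 : ℝ) ≤ lam j * ((d j u : ℝ) - 1) := by
      intro j _
      have h1 : (1 : ℝ) ≤ (d j u : ℝ) := by exact_mod_cast hC j u hu
      exact mul_nonneg (hlam j) (by linarith)
    have hsingle : lam i * ((d i u : ℝ) - 1) ≤ ∑ j, lam j * ((d j u : ℝ) - 1) :=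
      Finset.single_le_sum hlow (Finset.mem_univ i)
    have hpos : 0 < lam i * ((d i u : ℝ) - 1) := by
      have : (2 : ℝ) ≤ (d i u : ℝ) := by exact_mod_cast h2
      exact mul_pos hlampos (by linarith)
    have hsplit : ∑ j, lam j * ((d j u : ℝ) - 1)
        = (∑ j, lam j * (d j u : ℝ)) - ∑ j, lam j := by
      rw [← Finset.sum_sub_distrib]
      refine Finset.sum_congr rfl fun j _ => by ring
    have := hzdeg u
    rw [hB u] at this
    rw [hsplit, hsum] at hsingle
    linarith
  -- pick an index with positive weight
  have hex : ∃ i0 : Fin k, lam i0 ≠ 0 := by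
    by_contra h
    push_neg at h
    have : (∑ i, lam i) = 0 := Finset.sum_eq_zero fun i _ => h i
    rw [hsum] at this
    norm_num at this
  obtain ⟨i0, hi0⟩ := hex
  -- replace zero-weight joins by J i0
  refine ⟨k, fun i => if lam i = 0 then J i0 else J i, lam, ?_, hlam, hsum, ?_, ?_⟩
  · intro i
    by_cases h : lam i = 0 <;> simp [h, hJ i0, hJ i]
  · intro e
    rw [hzeq e]
    refine Finset.sum_congr rfl fun i _ => ?_
    by_cases h : lam i = 0 <;> simp [h]
  · intro i u hu
    by_cases h : lam i = 0
    · simpa [h] using hD i0 hi0 u hu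
    · simpa [h] using hD i h u hu

end TSPPaper
end
end

section
/- Let x ∈ SUBT(K_n) be such that its support graph G_x is 3-edge-connected and cubic, and let 𝒞 be any 2-factor of G_x. Define y ∈ ℝ^{E_n} by y_e = 1/2 for e ∈ 𝒞, y_e = 1 for e ∈ E_x∖𝒞, and y_e = 0 otherwise. Then y ∈ SUBT(K_n). -/
open scoped Classical

noncomputable section

namespace TSPPaper

variable {V : Type*} [Fintype V] [DecidableEq V]

section AuxStatement17

variable {V : Type*} [Fintype V] [DecidableEq V]

lemma mem_crossEdges' {U : Finset V} {e : Sym2 V} :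
    e ∈ crossEdges U ↔ ∃ u v : V, e = s(u, v) ∧ u ∈ U ∧ v ∉ U := by
  simp [crossEdges]

lemma cutSum_eq_sum_crossEdges (z : Sym2 V → ℝ) (U : Finset V) :
    cutSum z U = ∑ e ∈ crossEdges U, z e := by
  rw [cutSum, ← Finset.sum_product']
  refine Finset.sum_bij (fun p _ => s(p.1, p.2)) ?_ ?_ ?_ ?_
  · rintro ⟨u, v⟩ hp
    simp only [Finset.mem_product, Finset.mem_compl] at hp
    exact mem_crossEdges'.2 ⟨u, v, rfl, hp.1, hp.2⟩
  · rintro ⟨u, v⟩ hp ⟨u', v'⟩ hp' h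
    simp only [Finset.mem_product, Finset.mem_compl] at hp hp'
    rw [Sym2.eq_iff] at h
    rcases h with ⟨rfl, rfl⟩ | ⟨rfl, rfl⟩
    · rfl
    · exact absurd hp.1 hp'.2
  · intro e he
    obtain ⟨u, v, rfl, hu, hv⟩ := mem_crossEdges'.1 he
    exact ⟨⟨u, v⟩, by simp [Finset.mem_product, hu, hv], rfl⟩
  · rintro ⟨u, v⟩ _
    rfl

lemma sum_crossEdges_eq_sum_cutEdges (x z : Sym2 V → ℝ) (hx0 : ∀ e, 0 ≤ x e)
    (hz : ∀ e, x e = 0 → z e = 0) (U : Finset V) :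
    ∑ e ∈ crossEdges U, z e = ∑ e ∈ cutEdges x U, z e := by
  rw [cutEdges]
  refine (Finset.sum_filter_of_ne fun e _ hz' => ?_).symm
  by_contra h
  exact hz' (hz e (le_antisymm (not_lt.1 h) (hx0 e)))

omit [Fintype V] in
lemma filter_mem_card_eq_inter {U : Finset V} (a b : V) (hab : a ≠ b) :
    (U.filter (fun v => v ∈ s(a, b))).card =
      (if a ∈ U then 1 else 0) + (if b ∈ U then 1 else 0) := by
  have : U.filter (fun v => v ∈ s(a, b)) = U ∩ {a, b} := by
    ext v
    simp [Sym2.mem_iff, Finset.mem_inter, and_comm]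
  rw [this]
  by_cases ha : a ∈ U <;> by_cases hb : b ∈ U <;>
    simp [Finset.inter_comm, Finset.insert_inter_of_mem, Finset.insert_inter_of_notMem,
      Finset.singleton_inter_of_mem, Finset.singleton_inter_of_notMem, ha, hb, hab,
      Finset.card_insert_of_notMem, Finset.mem_singleton]

lemma crossEdges_mk_iff {U : Finset V} {a b : V} (hab : a ≠ b) :
    s(a, b) ∈ crossEdges U ↔ ((a ∈ U ∧ b ∉ U) ∨ (b ∈ U ∧ a ∉ U)) := by
  rw [mem_crossEdges']
  constructor
  · rintro ⟨u, v, h, hu, hv⟩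
    rw [Sym2.eq_iff] at h
    rcases h with ⟨rfl, rfl⟩ | ⟨rfl, rfl⟩
    · exact Or.inl ⟨hu, hv⟩
    · exact Or.inr ⟨hu, hv⟩
  · rintro (⟨ha, hb⟩ | ⟨hb, ha⟩)
    · exact ⟨a, b, rfl, ha, hb⟩
    · exact ⟨b, a, Sym2.eq_swap.symm, hb, ha⟩

lemma even_card_cross_of_two_factor (x : Sym2 V → ℝ)
    (hdiag : ∀ e : Sym2 V, e.IsDiag → x e = 0)
    (C : Finset (Sym2 V)) (hC : ∀ e ∈ C, 0 < x e)
    (h2f : ∀ v : V, edgeDeg C v = 2) (U : Finset V) :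
    Even ((C.filter (· ∈ crossEdges U)).card) := by
  have key : ∑ v ∈ U, edgeDeg C v = ∑ e ∈ C, (U.filter (fun v => v ∈ e)).card := by
    simp only [edgeDeg, Finset.card_filter]
    exact Finset.sum_comm
  have hL : ∑ v ∈ U, edgeDeg C v = 2 * U.card := by
    simp [h2f, Finset.sum_const, mul_comm]
  have hcast : ((C.filter (· ∈ crossEdges U)).card : ZMod 2) = 0 := by
    have h1 : ((C.filter (· ∈ crossEdges U)).card : ZMod 2)
        = ∑ e ∈ C, (if e ∈ crossEdges U then (1 : ZMod 2) else 0) := by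
      rw [Finset.card_filter]
      push_cast
      rfl
    have h2 : ∀ e ∈ C, (if e ∈ crossEdges U then (1 : ZMod 2) else 0)
        = ((U.filter (fun v => v ∈ e)).card : ZMod 2) := by
      intro e he
      induction e using Sym2.ind with
      | _ a b =>
        have hab : a ≠ b := by
          rintro rfl
          exact absurd (hdiag s(a, a) (by simp)) (ne_of_gt (hC _ he))
        rw [filter_mem_card_eq_inter a b hab]
        by_cases ha : a ∈ U <;> by_cases hb : b ∈ U <;>
          simp [crossEdges_mk_iff hab, ha, hb] <;> decide
    rw [h1, Finset.sum_congr rfl h2, ← Nat.cast_sum, ← key, hL]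
    push_cast
    rw [show (2 : ZMod 2) = 0 from rfl, zero_mul]
  have := (ZMod.natCast_eq_zero_iff _ 2).1 hcast
  exact even_iff_two_dvd.2 this

end AuxStatement17

/-- Observation `lem:in-subtour`. If `x ∈ SUBT(K_n)` has a 3-edge-connected
cubic support graph and `𝒞` is a 2-factor of `G_x`, then the vector `y` which is `1/2` on `𝒞`,
`1` on `E_x ∖ 𝒞` and `0` elsewhere lies in `SUBT(K_n)`. -/
theorem statement17 (n : ℕ) (hn : 3 ≤ n) (x : Sym2 (Fin n) → ℝ) (hx : inSUBT x)
    (h3ec : ∀ U : Finset (Fin n), U.Nonempty → U ≠ Finset.univ → 3 ≤ (cutEdges x U).card)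
    (hcubic : ∀ v : Fin n, suppDeg x v = 3)
    (C : Finset (Sym2 (Fin n))) (hC : ∀ e ∈ C, 0 < x e)
    (h2f : ∀ v : Fin n, edgeDeg C v = 2)
    (y : Sym2 (Fin n) → ℝ)
    (hyC : ∀ e ∈ C, y e = 1 / 2)
    (hyE : ∀ e : Sym2 (Fin n), 0 < x e → e ∉ C → y e = 1)
    (hy0 : ∀ e : Sym2 (Fin n), x e = 0 → y e = 0) :
    inSUBT y := by
  obtain ⟨hdiag, hnn, hle, hdeg, hcut⟩ := hx
  have hmem_cut : ∀ (U : Finset (Fin n)) (e : Sym2 (Fin n)),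
      e ∈ cutEdges x U ↔ e ∈ crossEdges U ∧ 0 < x e := by
    intro U e
    simp [cutEdges]
  -- main cut formula
  have hmain : ∀ U : Finset (Fin n),
      cutSum y U = (((cutEdges x U).filter (· ∈ C)).card : ℝ) * (1 / 2)
        + (((cutEdges x U).filter (· ∉ C)).card : ℝ) := by
    intro U
    rw [cutSum_eq_sum_crossEdges, sum_crossEdges_eq_sum_cutEdges x y hnn hy0,
      ← Finset.sum_filter_add_sum_filter_not (cutEdges x U) (· ∈ C)]
    congr 1
    · rw [Finset.sum_congr rfl (fun e he => hyC e (Finset.mem_filter.1 he).2)]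
      simp [mul_comm]
    · have h1 : ∀ e ∈ (cutEdges x U).filter (· ∉ C), y e = 1 := by
        intro e he
        obtain ⟨he1, he2⟩ := Finset.mem_filter.1 he
        exact hyE e ((hmem_cut U e).1 he1).2 he2
      rw [Finset.sum_congr rfl h1]
      simp
  -- the C-part of any cut coincides with the crossing edges of C
  have hinter : ∀ U : Finset (Fin n),
      (cutEdges x U).filter (· ∈ C) = C.filter (· ∈ crossEdges U) := by
    intro U
    ext e
    simp only [Finset.mem_filter, hmem_cut U e]
    constructor
    · rintro ⟨⟨h1, _⟩, h3⟩; exact ⟨h3, h1⟩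
    · rintro ⟨h1, h2⟩; exact ⟨⟨h2, hC e h1⟩, h1⟩
  refine ⟨fun e he => hy0 e (hdiag e he), ?_, ?_, ?_, ?_⟩
  · intro e
    rcases lt_or_eq_of_le (hnn e) with h | h
    · by_cases hc : e ∈ C
      · rw [hyC e hc]; norm_num
      · rw [hyE e h hc]; norm_num
    · rw [hy0 e h.symm]
  · intro e
    rcases lt_or_eq_of_le (hnn e) with h | h
    · by_cases hc : e ∈ C
      · rw [hyC e hc]; norm_num
      · rw [hyE e h hc]
    · rw [hy0 e h.symm]; norm_num
  · -- degree constraints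
    intro v
    have hcutv : cutEdges x {v}
        = Finset.univ.filter (fun e : Sym2 (Fin n) => 0 < x e ∧ v ∈ e) := by
      ext e
      induction e using Sym2.ind with
      | _ a b =>
        rw [hmem_cut, mem_crossEdges']
        simp only [Finset.mem_filter, Finset.mem_univ, true_and, Finset.mem_singleton]
        constructor
        · rintro ⟨⟨u, w, heq, rfl, hw⟩, hx'⟩
          exact ⟨hx', heq ▸ Sym2.mem_mk_left _ _⟩
        · rintro ⟨hx', hv⟩
          refine ⟨?_, hx'⟩
          have hab : a ≠ b := by
            rintro rfl
            exact absurd (hdiag s(a, a) (by simp)) (ne_of_gt hx')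
          rcases Sym2.mem_iff.1 hv with h | h
          · exact ⟨a, b, rfl, h.symm, fun hh => hab (hh.trans h).symm⟩
          · exact ⟨b, a, Sym2.eq_swap.symm, h.symm, fun hh => hab (hh.trans h)⟩
    have hc1 : ((cutEdges x {v}).filter (· ∈ C)).card = 2 := by
      have : (cutEdges x {v}).filter (· ∈ C) = C.filter (fun e => v ∈ e) := by
        rw [hcutv]
        ext e
        simp only [Finset.mem_filter, Finset.mem_univ, true_and]
        constructor
        · rintro ⟨⟨_, h2⟩, h3⟩; exact ⟨h3, h2⟩
        · rintro ⟨h1, h2⟩; exact ⟨⟨hC e h1, h2⟩, h1⟩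
      rw [this]
      exact h2f v
    have hc3 : (cutEdges x {v}).card = 3 := by
      rw [hcutv]; exact hcubic v
    have hc2 : ((cutEdges x {v}).filter (· ∉ C)).card = 1 := by
      have := Finset.card_filter_add_card_filter_not
        (s := cutEdges x {v}) (p := (· ∈ C))
      omega
    rw [hmain, hc1, hc2]
    norm_num
  · intro U hU1 hU2
    have ht : 3 ≤ (cutEdges x U).card := h3ec U hU1 hU2
    have heven : Even (((cutEdges x U).filter (· ∈ C)).card) := by
      rw [hinter U]
      exact even_card_cross_of_two_factor x hdiag C hC h2f U
    have hsplit := Finset.card_filter_add_card_filter_not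
      (s := cutEdges x U) (p := (· ∈ C))
    set c1 := ((cutEdges x U).filter (· ∈ C)).card with hc1
    set c2 := ((cutEdges x U).filter (· ∉ C)).card with hc2
    have hkey : 4 ≤ c1 + 2 * c2 := by
      rw [Nat.even_iff] at heven
      omega
    have hkeyR : (4 : ℝ) ≤ (c1 : ℝ) + 2 * (c2 : ℝ) := by exact_mod_cast hkey
    rw [hmain]
    linarith


end TSPPaper
end
end
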